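/- arXiv:1210.2458 — 7 statements merged into one kernel-verified Lean document; each statement's English description precedes it below -/
import Mathlib

section
/- Let n ∈ ℕ, let k ≥ 1, and let V be a set with a coloring col : V → [n]. Every finite word w ∈ V* with |w| ≥ k^n satisfies MaxSc_c(w) ≥ k for some color c ∈ [n]. -/
namespace FDGames


/-- Score of color `c` read over the reversed word (head = last letter). -/
def scAux {V : Type*} (col : V → ℕ) (c : ℕ) : List V → ℕ
  | [] => 0
  | v :: w =>
    if c < col v then scAux col c w
    else if col v = c then scAux col c w + 1
    else 0

/-- `Sc col c w` : the scoring function `Sc_c` of McNaughton, for the word `w`. -/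
def Sc {V : Type*} (col : V → ℕ) (c : ℕ) (w : List V) : ℕ :=
  scAux col c w.reverse

/-- `MaxSc col c w` : maximum of `Sc_c` over all prefixes of `w`. -/
def MaxSc {V : Type*} (col : V → ℕ) (c : ℕ) (w : List V) : ℕ :=
  (Finset.range (w.length + 1)).sup fun m => Sc col c (w.take m)

lemma suffix_filter' {V : Type*} (p : V → Bool) :
    ∀ {l s : List V}, s <:+ l.filter p → ∃ t, t <:+ l ∧ t.filter p = s := by
  intro l
  induction l with
  | nil => intro s hs; simp at hs; exact ⟨[], by simp [hs]⟩
  | cons v l ih =>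
    intro s hs
    by_cases hv : p v
    · rw [List.filter_cons_of_pos hv] at hs
      rcases List.suffix_cons_iff.mp hs with h | h
      · exact ⟨v :: l, List.suffix_refl _, by rw [List.filter_cons_of_pos hv, h]⟩
      · obtain ⟨t, ht, hft⟩ := ih h
        exact ⟨t, ht.trans (List.suffix_cons v l), hft⟩
    · rw [List.filter_cons_of_neg hv] at hs
      obtain ⟨t, ht, hft⟩ := ih hs
      exact ⟨t, ht.trans (List.suffix_cons v l), hft⟩

lemma scAux_filter {V : Type*} (col : V → ℕ) (c : ℕ) (p : V → Bool) :
    ∀ l : List V, (∀ v ∈ l, p v = false → c < col v) →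
      scAux col c (l.filter p) = scAux col c l := by
  intro l
  induction l with
  | nil => intro _; rfl
  | cons v l ih =>
    intro h
    by_cases hv : p v
    · rw [List.filter_cons_of_pos hv, scAux, scAux,
        ih fun u hu => h u (List.mem_cons_of_mem v hu)]
    · have hc : c < col v := h v List.mem_cons_self (Bool.eq_false_iff.mpr hv)
      rw [List.filter_cons_of_neg hv, scAux, if_pos hc,
        ih fun u hu => h u (List.mem_cons_of_mem v hu)]

lemma scAux_const_run {V : Type*} (col : V → ℕ) (c : ℕ) :
    ∀ r t : List V, (∀ v ∈ r, col v = c) →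
      scAux col c (r ++ t) = r.length + scAux col c t := by
  intro r
  induction r with
  | nil => intro t _; simp
  | cons v r ih =>
    intro t h
    have hv : col v = c := h v List.mem_cons_self
    rw [List.cons_append, scAux, if_neg (by omega), if_pos hv,
      ih t fun u hu => h u (List.mem_cons_of_mem v hu)]
    simp; omega

/-- Counting step for the top color. -/
lemma aux_count {V : Type*} (col : V → ℕ) (k n : ℕ) (hk : 1 ≤ k) :
    ∀ N, ∀ l : List V, l.length ≤ N → (∀ v ∈ l, col v < n + 1) →
      (∀ s, s <:+ l → scAux col n s < k) →
      l.length + 1 ≤ k * ((l.filter fun v => decide (col v < n)).length + 1) := by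
  intro N
  induction N with
  | zero =>
    intro l hl _ _
    have : l.length = 0 := by omega
    rw [this]
    have h2 : k ≤ k * ((l.filter fun v => decide (col v < n)).length + 1) :=
      Nat.le_mul_of_pos_right k (by omega)
    omega
  | succ N ih =>
    intro l hl hmem hsuf
    set r := l.takeWhile (fun v => decide (col v = n)) with hr
    set rest := l.dropWhile (fun v => decide (col v = n)) with hrest
    have hsplit : r ++ rest = l := List.takeWhile_append_dropWhile ..
    have hrcol : ∀ v ∈ r, col v = n := by
      intro v hv
      rw [hr] at hv
      have := List.mem_takeWhile_imp hv
      simpa using this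
    have hscl : scAux col n l = r.length + scAux col n rest := by
      rw [← hsplit]; exact scAux_const_run col n r rest hrcol
    have hlk : scAux col n l < k := hsuf l (List.suffix_refl l)
    have hrlen : r.length + 1 ≤ k := by omega
    match hre : rest with
    | [] =>
      have : l.length = r.length := by rw [← hsplit]; simp
      calc l.length + 1 = r.length + 1 := by omega
        _ ≤ k := hrlen
        _ ≤ k * ((l.filter fun v => decide (col v < n)).length + 1) :=
          Nat.le_mul_of_pos_right k (by omega)
    | v :: rest' =>
      have hvcol : ¬ (col v = n) := by
        have := List.head?_dropWhile_not (fun v => decide (col v = n)) l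
        rw [← hrest] at this
        simpa using this
      have hsub : rest <:+ l := List.dropWhile_suffix _
      have hvl : v ∈ l := hsub.subset (by rw [hre]; exact List.mem_cons_self)
      have hvn : col v < n := by have := hmem v hvl; omega
      have hrest'sub : rest' <:+ l := by
        refine List.IsSuffix.trans ?_ hsub
        rw [hre]; exact List.suffix_cons v rest'
      have hlen : l.length = r.length + 1 + rest'.length := by
        rw [← hsplit]; simp; omega
      have ihres := ih rest' (by omega)
        (fun u hu => hmem u (hrest'sub.subset hu))
        (fun s hs => hsuf s (hs.trans hrest'sub))
      have hfil : (l.filter fun v => decide (col v < n)).length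
          = (rest'.filter fun v => decide (col v < n)).length + 1 := by
        rw [← hsplit, List.filter_append, List.filter_cons_of_pos (by simpa using hvn)]
        have : r.filter (fun v => decide (col v < n)) = [] := by
          refine List.filter_eq_nil_iff.mpr ?_
          intro u hu
          have := hrcol u hu
          simp; omega
        rw [this]; simp
      rw [hfil]
      calc l.length + 1 = (r.length + 1) + (rest'.length + 1) := by omega
        _ ≤ k + k * ((rest'.filter fun v => decide (col v < n)).length + 1) :=
            Nat.add_le_add hrlen ihres
        _ = k * ((rest'.filter fun v => decide (col v < n)).length + 1 + 1) := by ring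

/-- Main counting lemma. -/
lemma key {V : Type*} (col : V → ℕ) (k : ℕ) (hk : 1 ≤ k) :
    ∀ n, ∀ l : List V, (∀ v ∈ l, col v < n) →
      (∀ c < n, ∀ s, s <:+ l → scAux col c s < k) → l.length < k ^ n := by
  intro n
  induction n with
  | zero =>
    intro l hmem _
    match l with
    | [] => simp
    | v :: l => exact absurd (hmem v List.mem_cons_self) (by omega)
  | succ n ih =>
    intro l hmem hsc
    have h1 := aux_count col k n hk l.length l le_rfl hmem (fun s hs => hsc n (by omega) s hs)
    set m := (l.filter fun v => decide (col v < n)) with hm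
    have hmlt : m.length < k ^ n := by
      refine ih m ?_ ?_
      · intro v hv
        have := (List.mem_filter.mp (hm ▸ hv)).2
        simpa using this
      · intro c hc s hs
        obtain ⟨t, ht, hft⟩ := suffix_filter' (fun v => decide (col v < n)) (hm ▸ hs)
        rw [← hft, scAux_filter col c _ t
          (fun v _ hv => by simp only [decide_eq_false_iff_not, not_lt] at hv; omega)]
        exact hsc c (by omega) t ht
    calc l.length < l.length + 1 := by omega
      _ ≤ k * (m.length + 1) := h1
      _ ≤ k * k ^ n := by
          have : m.length + 1 ≤ k ^ n := hmlt
          exact Nat.mul_le_mul_left k this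
      _ = k ^ (n + 1) := by ring

/-- Lemma 1: every word of length at least `k ^ n` reaches score `k` for some
color `c ∈ [n]`. -/
theorem stmt0 (n k : ℕ) (hk : 1 ≤ k) {V : Type*} (col : V → ℕ)
    (hcol : ∀ v, col v < n) (w : List V) (hw : k ^ n ≤ w.length) :
    ∃ c < n, k ≤ MaxSc col c w := by
  by_contra h
  push_neg at h
  have hkey := key col k hk n w.reverse (fun v _ => hcol v) ?_
  · rw [List.length_reverse] at hkey; omega
  · intro c hc s hs
    obtain ⟨t, ht⟩ := hs
    have hjle : s.length ≤ w.length := by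
      have := congrArg List.length ht
      simp at this; omega
    have hsval : s = (w.take s.length).reverse := by
      have h1 : w.reverse.drop (w.reverse.length - s.length) = s := by
        conv_lhs => rw [← ht]
        simp [List.drop_append]
      rw [List.reverse_take, ← (List.length_reverse : w.reverse.length = w.length)]
      exact h1.symm
    have hle : Sc col c (w.take s.length) ≤ MaxSc col c w := by
      apply Finset.le_sup (f := fun m => Sc col c (w.take m))
      simp [Finset.mem_range]; omega
    have : scAux col c s = Sc col c (w.take s.length) := by
      conv_lhs => rw [hsval]
      rfl
    have := h c hc
    omega

end FDGames
end

section
/- For every n ≥ 1 and every k ≥ 1 there exists a word u over the alphabet [n] (taking V = [n] with the identity coloring) of length |u| = k^n − 1 such that MaxSc_c(u) < k for every c ∈ [n]. Hence the bound k^n in the score-threshold lemma is tight. -/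
namespace FDGames


/-! ### Auxiliary construction -/

/-- `b` followed by `j` copies of `x :: b`. -/
def chain (x : ℕ) (b : List ℕ) : ℕ → List ℕ
  | 0 => b
  | j + 1 => chain x b j ++ x :: b

/-- The tight word: `blk k m c` uses colors `c, …, c+m-1` and has length `k^m - 1`. -/
def blk (k : ℕ) : ℕ → ℕ → List ℕ
  | 0, _ => []
  | m + 1, c => chain c (blk k m (c + 1)) (k - 1)

lemma chain_length (x : ℕ) (b : List ℕ) (j : ℕ) :
    (chain x b j).length = b.length + j * (b.length + 1) := by
  induction j with
  | zero => simp [chain]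
  | succ j ih => simp [chain, ih]; ring

lemma blk_length (k m c : ℕ) (hk : 1 ≤ k) : (blk k m c).length = k ^ m - 1 := by
  induction m generalizing c with
  | zero => simp [blk]
  | succ m ih =>
      have h1 : 1 ≤ k ^ m := Nat.one_le_pow _ _ hk
      simp only [blk, chain_length, ih]
      rw [pow_succ]
      obtain ⟨k', rfl⟩ : ∃ k', k = k' + 1 := ⟨k - 1, by omega⟩
      set a := (k' + 1) ^ m with ha
      have e1 : a * (k' + 1) = k' * a + a := by ring
      have e2 : a - 1 + 1 = a := by omega
      have e3 : (k' + 1 - 1) = k' := by omega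
      rw [e1, e2, e3]
      generalize k' * a = t
      omega

lemma mem_chain {x : ℕ} {b : List ℕ} {j v : ℕ} (h : v ∈ chain x b j) :
    v = x ∨ v ∈ b := by
  induction j with
  | zero => exact Or.inr h
  | succ j ih =>
      simp only [chain, List.mem_append, List.mem_cons] at h
      rcases h with h | h | h
      · exact ih h
      · exact Or.inl h
      · exact Or.inr h

lemma mem_blk {k m c v : ℕ} (h : v ∈ blk k m c) : c ≤ v ∧ v < c + m := by
  induction m generalizing c with
  | zero => simp [blk] at h
  | succ m ih =>
      rcases mem_chain h with rfl | h
      · omega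
      · have := ih h; omega

/-! ### Facts about `scAux` -/

lemma scAux_eq_zero {V : Type*} (col : V → ℕ) (d : ℕ) {l : List V}
    (h : ∀ v ∈ l, d < col v) : scAux col d l = 0 := by
  induction l with
  | nil => rfl
  | cons v w ih =>
      have hv := h v (by simp)
      simp only [scAux, if_pos hv]
      exact ih fun u hu => h u (by simp [hu])

lemma scAux_eq_countP {V : Type*} (col : V → ℕ) (d : ℕ) {l : List V}
    (h : ∀ v ∈ l, d ≤ col v) : scAux col d l = l.countP (fun v => col v = d) := by
  induction l with
  | nil => rfl
  | cons v w ih =>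
      have hv := h v (by simp)
      have ihw := ih fun u hu => h u (by simp [hu])
      by_cases hvd : col v = d
      · simp [scAux, hvd, List.countP_cons, ihw]
      · have : d < col v := lt_of_le_of_ne hv (Ne.symm hvd)
        simp [scAux, this, List.countP_cons, hvd, ihw]

lemma scAux_append_reset {V : Type*} (col : V → ℕ) (d : ℕ) (l₁ l₂ : List V) (v : V)
    (hv : col v < d) : scAux col d (l₁ ++ v :: l₂) ≤ scAux col d l₁ := by
  induction l₁ with
  | nil =>
      simp only [List.nil_append, scAux]
      rw [if_neg (by omega), if_neg (by omega)]
  | cons u w ih =>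
      simp only [List.cons_append, scAux]
      by_cases h1 : d < col u
      · simpa [h1] using ih
      · by_cases h2 : col u = d
        · simp [h1, h2]; omega
        · simp [h1, h2]

/-- Prefix splitting over append. -/
lemma prefix_append_cases : ∀ {a p b : List ℕ}, p <+: a ++ b →
    p <+: a ∨ ∃ q, p = a ++ q ∧ q <+: b := by
  intro a
  induction a with
  | nil => intro p b h; exact Or.inr ⟨p, rfl, h⟩
  | cons x a ih =>
      intro p b h
      cases p with
      | nil => exact Or.inl (List.nil_prefix)
      | cons y p =>
          obtain ⟨rfl, hp⟩ := List.cons_prefix_cons.mp h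
          rcases ih hp with h1 | ⟨q, rfl, hq⟩
          · exact Or.inl (List.cons_prefix_cons.mpr ⟨rfl, h1⟩)
          · exact Or.inr ⟨q, rfl, hq⟩

/-! ### The score bound -/

lemma score_bound (k : ℕ) (hk : 1 ≤ k) :
    ∀ m c d p, p <+: blk k m c → scAux id d p.reverse < k := by
  intro m
  induction m with
  | zero =>
      intro c d p hp
      rw [List.prefix_nil.mp hp]
      simp only [List.reverse_nil, scAux]; omega
  | succ m ih =>
      intro c d p hp
      simp only [blk] at hp
      set b := blk k m (c + 1) with hb
      rcases lt_trichotomy d c with hdc | heq | hdc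
      · -- every letter is ≥ c > d
        have : ∀ v ∈ p.reverse, d < id v := by
          intro v hv
          rw [List.mem_reverse] at hv
          rcases mem_chain (hp.subset hv) with rfl | h
          · exact hdc
          · have := mem_blk h; simp; omega
        rw [scAux_eq_zero _ _ this]; omega
      · -- count the `c`s
        subst heq
        have hge : ∀ v ∈ p.reverse, d ≤ id v := by
          intro v hv
          rw [List.mem_reverse] at hv
          rcases mem_chain (hp.subset hv) with rfl | h
          · exact le_refl _
          · have := mem_blk h; simp; omega
        rw [scAux_eq_countP _ _ hge]
        simp only [id_eq]
        have hcount : ∀ j, (chain d b j).countP (fun v => v = d) ≤ j := by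
          intro j
          induction j with
          | zero =>
              simp only [chain]
              rw [List.countP_eq_zero.mpr]
              intro v hv
              have := mem_blk (hb ▸ hv); simp; omega
          | succ j ihj =>
              simp only [chain, List.countP_append, List.countP_cons]
              have hzero : b.countP (fun v => v = d) = 0 := by
                rw [List.countP_eq_zero.mpr]
                intro v hv
                have := mem_blk (hb ▸ hv); simp; omega
              simp [hzero]; omega
        calc p.reverse.countP (fun v => v = d)
            = p.countP (fun v => v = d) := List.countP_reverse
          _ ≤ (chain d b (k - 1)).countP (fun v => v = d) :=
              hp.sublist.countP_le
          _ ≤ k - 1 := hcount _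
          _ < k := by omega
      · -- d > c : induction on the number of repetitions
        have key : ∀ j, ∀ q, q <+: chain c b j → scAux id d q.reverse < k := by
          intro j
          induction j with
          | zero => intro q hq; exact ih (c + 1) d q hq
          | succ j ihj =>
              intro q hq
              simp only [chain] at hq
              rcases prefix_append_cases hq with hq | ⟨r, rfl, hr⟩
              · exact ihj q hq
              · cases r with
                | nil => simpa using ihj _ List.prefix_rfl
                | cons x s =>
                    obtain ⟨hxc, hs⟩ := List.cons_prefix_cons.mp hr
                    rw [List.reverse_append, List.reverse_cons]
                    calc scAux id d (s.reverse ++ [x] ++ (chain c b j).reverse)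
                        = scAux id d (s.reverse ++ x :: (chain c b j).reverse) := by
                          simp
                      _ ≤ scAux id d s.reverse :=
                          scAux_append_reset _ _ _ _ _
                            (by simp only [id_eq, hxc]; exact hdc)
                      _ < k := ih (c + 1) d s hs
        exact key (k - 1) p hp

/-- Tightness of Lemma 1: over the alphabet `[n]` with the identity coloring,
there is a word of length `k ^ n - 1` all of whose scores stay below `k`. -/
theorem stmt1 (n k : ℕ) (hn : 1 ≤ n) (hk : 1 ≤ k) :
    ∃ u : List ℕ, (∀ x ∈ u, x < n) ∧ u.length = k ^ n - 1 ∧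
      ∀ c < n, MaxSc id c u < k := by
  refine ⟨blk k n 0, ?_, blk_length k n 0 hk, ?_⟩
  · intro x hx
    have := mem_blk hx; omega
  · intro c _
    rw [MaxSc]
    rw [Finset.sup_lt_iff (show (⊥ : ℕ) < k from hk)]
    intro m _
    exact score_bound k hk n 0 c _ (List.take_prefix m _)

end FDGames
end

section
/- Let (G, col) be a parity game on a finite game graph with vertex set V and coloring col : V → [n], let i ∈ {0,1}, and let σ be a positional winning strategy for Player i. Then every play ρ consistent with σ satisfies MaxSc_c(ρ) ≤ |V|_c for every c ∈ [n] with Par(c) = 1 − i, where |V|_c = |{v ∈ V : col(v) = c}| and Par(c) is 0 if c is even and 1 if c is odd. -/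
namespace FDGames


/-- A game graph: ownership partition, edge relation, initial vertex, and
every vertex has at least one successor. -/
structure GameGraph (V : Type*) where
  own : V → Fin 2
  E : V → V → Prop
  vin : V
  succ : ∀ v, ∃ v', E v v'

/-- An infinite play: starts at the initial vertex and follows edges. -/
def IsPlay {V : Type*} (G : GameGraph V) (ρ : ℕ → V) : Prop :=
  ρ 0 = G.vin ∧ ∀ m, G.E (ρ m) (ρ (m + 1))

/-- A play consistent with the strategy `σ` of Player `i`; the strategy gets the
history (the vertices strictly before the current one) and the current vertex. -/
def ConsistentPlay {V : Type*} (G : GameGraph V) (i : Fin 2)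
    (σ : List V → V → V) (ρ : ℕ → V) : Prop :=
  IsPlay G ρ ∧ ∀ m, G.own (ρ m) = i → ρ (m + 1) = σ ((List.range m).map ρ) (ρ m)

/-- The minimal color seen infinitely often along `ρ`. -/
noncomputable def minInfCol {V : Type*} (col : V → ℕ) (ρ : ℕ → V) : ℕ :=
  sInf {c | ∀ N, ∃ m, N ≤ m ∧ col (ρ m) = c}

/-- The play `ρ` is winning for Player `i` in the (min-) parity game. -/
def WinningPlay {V : Type*} (col : V → ℕ) (i : Fin 2) (ρ : ℕ → V) : Prop :=
  minInfCol col ρ % 2 = (i : ℕ)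

/-- A (legal) strategy always moves along edges. -/
def IsStrategy {V : Type*} (G : GameGraph V) (σ : List V → V → V) : Prop :=
  ∀ h v, G.E v (σ h v)

/-- A positional strategy only depends on the current vertex. -/
def Positional {V : Type*} (σ : List V → V → V) : Prop :=
  ∀ h h' v, σ h v = σ h' v

/-- A winning strategy for Player `i` in the parity game `(G, col)`. -/
def WinningStrategy {V : Type*} (G : GameGraph V) (col : V → ℕ) (i : Fin 2)
    (σ : List V → V → V) : Prop :=
  IsStrategy G σ ∧ ∀ ρ, ConsistentPlay G i σ ρ → WinningPlay col i ρ

/-- Player `i` wins the parity game `(G, col)`. -/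
def WinsGame {V : Type*} (G : GameGraph V) (col : V → ℕ) (i : Fin 2) : Prop :=
  ∃ σ, WinningStrategy G col i σ

private lemma succ_mod (a d : ℕ) (hd : 0 < d) :
    (a + 1) % d = if a % d + 1 = d then 0 else a % d + 1 := by
  have h := Nat.div_add_mod a d
  have h2 : a + 1 = d * (a / d) + (a % d + 1) := by omega
  rw [h2, Nat.mul_add_mod]
  split
  · next h3 => rw [h3, Nat.mod_self]
  · next h3 =>
    exact Nat.mod_eq_of_lt (by have := Nat.mod_lt a hd; omega)

private lemma Sc_step {V : Type*} (col : V → ℕ) (c : ℕ) (ρ : ℕ → V) (m : ℕ) :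
    Sc col c ((List.range (m+1)).map ρ) =
      if c < col (ρ m) then Sc col c ((List.range m).map ρ)
      else if col (ρ m) = c then Sc col c ((List.range m).map ρ) + 1
      else 0 := by
  simp [Sc, List.range_succ, scAux]

private lemma Sc_struct {V : Type*} (col : V → ℕ) (c : ℕ) (ρ : ℕ → V) :
    ∀ m : ℕ, ∃ p, p ≤ m ∧ (∀ q, p ≤ q → q < m → c ≤ col (ρ q)) ∧
      ((Finset.Ico p m).filter fun q => col (ρ q) = c).card
        = Sc col c ((List.range m).map ρ)
  | 0 => ⟨0, le_rfl, by omega, by simp [Sc, scAux]⟩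
  | (m+1) => by
    obtain ⟨p, hpm, hge, hcard⟩ := Sc_struct col c ρ m
    rw [Sc_step]
    by_cases h1 : c < col (ρ m)
    · refine ⟨p, by omega, ?_, ?_⟩
      · intro q hpq hq
        rcases Nat.lt_succ_iff_lt_or_eq.mp hq with h | h
        · exact hge q hpq h
        · subst h; omega
      · rw [if_pos h1, ← hcard]
        congr 1
        rw [Nat.Ico_succ_right_eq_insert_Ico hpm, Finset.filter_insert,
          if_neg (by omega)]
    · by_cases h2 : col (ρ m) = c
      · refine ⟨p, by omega, ?_, ?_⟩
        · intro q hpq hq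
          rcases Nat.lt_succ_iff_lt_or_eq.mp hq with h | h
          · exact hge q hpq h
          · subst h; omega
        · rw [if_neg h1, if_pos h2, ← hcard,
            Nat.Ico_succ_right_eq_insert_Ico hpm, Finset.filter_insert,
            if_pos h2, Finset.card_insert_of_notMem (by simp)]
      · exact ⟨m + 1, le_rfl, by omega, by simp [if_neg h1, if_neg h2]⟩

/-- Remark 1: a positional winning strategy for Player `i` in a parity game on a
finite game graph bounds the scores of the colors of the losing player's parity
by the number of vertices of that color. -/
theorem stmt3 {V : Type*} [Fintype V] (n : ℕ) (G : GameGraph V) (col : V → ℕ)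
    (hcol : ∀ v, col v < n) (i : Fin 2) (σ : List V → V → V)
    (hpos : Positional σ) (hwin : WinningStrategy G col i σ)
    (ρ : ℕ → V) (hρ : ConsistentPlay G i σ ρ)
    (c : ℕ) (hc : c < n) (hpar : c % 2 = 1 - (i : ℕ)) (m : ℕ) :
    Sc col c ((List.range m).map ρ) ≤ (Finset.univ.filter fun v => col v = c).card := by
  by_contra hcon
  push_neg at hcon
  obtain ⟨p, hpm, hge, hcard⟩ := Sc_struct col c ρ m
  rw [← hcard] at hcon
  -- pigeonhole: two distinct indices with the same color-c vertex
  obtain ⟨x, hx, y, hy, hxy, hmap⟩ :=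
    Finset.exists_ne_map_eq_of_card_lt_of_maps_to hcon
      (f := ρ) (fun a ha => by
        simp only [Finset.mem_coe, Finset.mem_filter] at ha ⊢
        exact ⟨Finset.mem_univ _, ha.2⟩)
  -- normalize so q₁ < q₂
  obtain ⟨q₁, q₂, hq12, hq1, hq2, heq⟩ :
      ∃ q₁ q₂, q₁ < q₂ ∧ q₁ ∈ (Finset.Ico p m).filter (fun q => col (ρ q) = c)
        ∧ q₂ ∈ (Finset.Ico p m).filter (fun q => col (ρ q) = c) ∧ ρ q₁ = ρ q₂ := by
    rcases lt_or_gt_of_ne hxy with h | h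
    · exact ⟨x, y, h, hx, hy, hmap⟩
    · exact ⟨y, x, h, hy, hx, hmap.symm⟩
  simp only [Finset.mem_filter, Finset.mem_Ico] at hq1 hq2
  set d := q₂ - q₁ with hd
  have hd0 : 0 < d := by omega
  set f : ℕ → ℕ := fun k => if k < q₂ then k else q₁ + (k - q₁) % d with hf
  set ρ' : ℕ → V := fun k => ρ (f k) with hρ'
  -- the key step identity
  have hstep : ∀ k, ρ' (k + 1) = ρ (f k + 1) := by
    intro k
    simp only [hρ', hf]
    by_cases h1 : k + 1 < q₂
    · rw [if_pos h1, if_pos (by omega)]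
    · by_cases h2 : k + 1 = q₂
      · rw [if_neg h1, if_pos (by omega)]
        have : (k + 1 - q₁) % d = 0 := by
          have : k + 1 - q₁ = d := by omega
          rw [this, Nat.mod_self]
        rw [this, Nat.add_zero, h2]; exact heq
      · have hk2 : q₂ ≤ k := by omega
        rw [if_neg h1, if_neg (by omega)]
        have ha : k + 1 - q₁ = (k - q₁) + 1 := by omega
        rw [ha, succ_mod _ _ hd0]
        split
        · next h3 =>
          have : q₁ + (k - q₁) % d + 1 = q₂ := by omega
          rw [this, ← heq, Nat.add_zero]
        · next h3 => ring_nf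
  -- bounds on f
  have hfb : ∀ k, p ≤ k → p ≤ f k ∧ f k < m := by
    intro k hk
    simp only [hf]
    split
    · omega
    · have := Nat.mod_lt (k - q₁) hd0
      omega
  -- ρ' is a consistent play
  have hcons' : ConsistentPlay G i σ ρ' := by
    obtain ⟨⟨h0, hE⟩, hcst⟩ := hρ
    refine ⟨⟨?_, ?_⟩, ?_⟩
    · show ρ (f 0) = G.vin
      have : f 0 = 0 := by simp only [hf]; rw [if_pos (by omega)]
      rw [this, h0]
    · intro k
      rw [hstep k]
      exact hE (f k)
    · intro k hown
      rw [hstep k]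
      have : ρ (f k + 1) = σ ((List.range (f k)).map ρ) (ρ (f k)) := hcst (f k) hown
      rw [this, hpos ((List.range (f k)).map ρ) ((List.range k).map ρ') (ρ (f k))]
  -- minInfCol of ρ' is c
  have hmem : ∀ N, ∃ k, N ≤ k ∧ col (ρ' k) = c := by
    intro N
    refine ⟨q₁ + d * (N + 1), ?_, ?_⟩
    · calc N ≤ N + 1 := by omega
        _ ≤ d * (N + 1) := Nat.le_mul_of_pos_left _ hd0
        _ ≤ q₁ + d * (N + 1) := by omega
    · simp only [hρ', hf]
      have h1 : ¬ (q₁ + d * (N + 1) < q₂) := by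
        have : d ≤ d * (N + 1) := Nat.le_mul_of_pos_right _ (by omega)
        omega
      rw [if_neg h1]
      have : q₁ + d * (N + 1) - q₁ = d * (N + 1) := by omega
      rw [this, Nat.mul_mod_right, Nat.add_zero, hq1.2]
  have hmic : minInfCol col ρ' = c := by
    unfold minInfCol
    have hcT : c ∈ {c' | ∀ N, ∃ k, N ≤ k ∧ col (ρ' k) = c'} := hmem
    apply le_antisymm (Nat.sInf_le hcT)
    apply le_csInf ⟨c, hcT⟩
    rintro c' hc'
    obtain ⟨k, hk, hkc⟩ := hc' p
    obtain ⟨h1, h2⟩ := hfb k hk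
    rw [← hkc]
    exact hge (f k) h1 h2
  have := hwin.2 ρ' hcons'
  unfold WinningPlay at this
  rw [hmic] at this
  have hi : (i : ℕ) < 2 := i.isLt
  omega

end FDGames
end

section
/- Let G be a finite game graph with vertex set V and coloring col : V → [n], and let |V|_c = |{v ∈ V : col(v) = c}|. For every threshold k > max_{c ∈ [n]} |V|_c and each i ∈ {0,1}: Player i wins the parity game (G, col) if and only if Player i wins the finite-time parity game (G, col, k). -/
namespace FDGames


/-- A finite play prefix `w` is consistent with the strategy `σ` of Player `i`. -/
def FinConsistent {V : Type*} (G : GameGraph V) (i : Fin 2)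
    (σ : List V → V → V) (w : List V) : Prop :=
  ∀ m, m + 1 < w.length → G.own (w.getD m G.vin) = i →
    w.getD (m + 1) G.vin = σ (w.take m) (w.getD m G.vin)

/-- A finite path from the initial vertex. -/
def FinPath {V : Type*} (G : GameGraph V) (w : List V) : Prop :=
  w.head? = some G.vin ∧ w.Chain' G.E

/-- A play of the finite-time parity game `(G, col, k)` (with colors in `[n]`):
a finite path from the initial vertex along which some score reaches the
threshold `k` exactly at the last vertex. -/
def FTPlay {V : Type*} (G : GameGraph V) (col : V → ℕ) (n k : ℕ) (w : List V) : Prop :=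
  FinPath G w ∧ (∃ c < n, MaxSc col c w = k) ∧ ∀ c < n, MaxSc col c w.dropLast < k

/-- The finished finite-time play `w` is winning for Player `i`. -/
def FTWinningPlay {V : Type*} (col : V → ℕ) (n k : ℕ) (i : Fin 2) (w : List V) : Prop :=
  ∃ c < n, MaxSc col c w = k ∧ c % 2 = (i : ℕ)

/-- Player `i` wins the finite-time parity game `(G, col, k)`. -/
def FTWins {V : Type*} (G : GameGraph V) (col : V → ℕ) (n k : ℕ) (i : Fin 2) : Prop :=
  ∃ σ, IsStrategy G σ ∧
    ∀ w, FTPlay G col n k w → FinConsistent G i σ w → FTWinningPlay col n k i w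

section ScLemmas
variable {V : Type*} (col : V → ℕ) (c : ℕ)

lemma Sc_nil : Sc col c [] = 0 := rfl

lemma Sc_concat (w : List V) (v : V) :
    Sc col c (w ++ [v]) =
      if c < col v then Sc col c w else if col v = c then Sc col c w + 1 else 0 := by
  simp [Sc, scAux]

lemma Sc_concat_le (w : List V) (v : V) : Sc col c (w ++ [v]) ≤ Sc col c w + 1 := by
  rw [Sc_concat]; split_ifs <;> omega

lemma MaxSc_nil : MaxSc col c ([] : List V) = 0 := by
  simp [MaxSc, Sc_nil]

lemma Sc_le_MaxSc (w : List V) : Sc col c w ≤ MaxSc col c w := by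
  have h : w = w.take (w.length) := by simp
  calc Sc col c w = Sc col c (w.take w.length) := by rw [← h]
  _ ≤ _ := Finset.le_sup (f := fun m => Sc col c (w.take m)) (by simp)

lemma MaxSc_concat (w : List V) (v : V) :
    MaxSc col c (w ++ [v]) = max (MaxSc col c w) (Sc col c (w ++ [v])) := by
  unfold MaxSc
  have hlen : (w ++ [v]).length + 1 = (w.length + 1) + 1 := by simp
  rw [hlen, Finset.range_add_one, Finset.sup_insert]
  have h1 : (w ++ [v]).take (w.length + 1) = w ++ [v] := by
    apply List.take_of_length_le; simp
  rw [h1]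
  have h2 : ((Finset.range (w.length + 1)).sup fun m => Sc col c ((w ++ [v]).take m))
      = (Finset.range (w.length + 1)).sup fun m => Sc col c (w.take m) := by
    apply Finset.sup_congr rfl
    intro m hm
    rw [List.take_append_of_le_length (by simpa using Nat.lt_succ_iff.mp (Finset.mem_range.mp hm))]
  rw [h2]
  exact sup_comm _ _

lemma MaxSc_concat_le (w : List V) (v : V) :
    MaxSc col c (w ++ [v]) ≤ MaxSc col c w + 1 := by
  rw [MaxSc_concat]
  have := Sc_concat_le col c w v
  have := Sc_le_MaxSc col c w
  omega

lemma MaxSc_take_le (w : List V) (j : ℕ) : MaxSc col c (w.take j) ≤ MaxSc col c w := by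
  apply Finset.sup_le
  intro m hm
  rw [List.take_take]
  apply Finset.le_sup (f := fun m => Sc col c (w.take m))
  simp only [Finset.mem_range]
  have hb : (w.take j).length = min j w.length := List.length_take
  have hm' := Finset.mem_range.mp hm
  omega

lemma MaxSc_dropLast_le (w : List V) : MaxSc col c w.dropLast ≤ MaxSc col c w := by
  rw [List.dropLast_eq_take]; exact MaxSc_take_le col c w _

/-- If the max score of `c` on `w` is `k ≥ 1` but below `k` on `w.dropLast`, then
the score of `w` itself is `k` and the last vertex has color `c`. -/
lemma Sc_eq_and_color {w : List V} (hw : w ≠ []) {k : ℕ} (hk : 1 ≤ k)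
    (h1 : MaxSc col c w = k) (h2 : MaxSc col c w.dropLast < k) :
    Sc col c w = k ∧ col (w.getLast hw) = c := by
  have hdec : w.dropLast ++ [w.getLast hw] = w := List.dropLast_append_getLast hw
  have hmax : MaxSc col c w = max (MaxSc col c w.dropLast) (Sc col c w) := by
    conv_lhs => rw [← hdec]
    rw [MaxSc_concat, hdec]
  have hsc : Sc col c w = k := by omega
  refine ⟨hsc, ?_⟩
  have := Sc_concat col c w.dropLast (w.getLast hw)
  rw [hdec] at this
  by_contra hne
  rcases Nat.lt_or_ge c (col (w.getLast hw)) with h | h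
  · rw [if_pos h] at this
    have := Sc_le_MaxSc col c w.dropLast
    omega
  · have hlt : col (w.getLast hw) < c := lt_of_le_of_ne h hne
    rw [if_neg (by omega), if_neg hne] at this
    omega

/-- decomposition from a high score: a suffix with all colors `≥ c` containing
`Sc` many `c`-colored vertices (stated on the reversed word). -/
lemma scAux_decomp : ∀ (r : List V), 1 ≤ scAux col c r →
    ∃ r₁ r₂ : List V, r = r₁ ++ r₂ ∧ (∀ x ∈ r₁, c ≤ col x) ∧
      r₁.countP (fun x => decide (col x = c)) = scAux col c r := by
  intro r
  induction r with
  | nil => intro h; simp [scAux] at h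
  | cons v t ih =>
    intro h
    by_cases h1 : c < col v
    · rw [show scAux col c (v :: t) = scAux col c t by simp [scAux, h1]] at h ⊢
      obtain ⟨r₁, r₂, hr, hall, hcount⟩ := ih h
      refine ⟨v :: r₁, r₂, by simp [hr], ?_, ?_⟩
      · intro x hx; rcases List.mem_cons.mp hx with rfl | hx
        · omega
        · exact hall x hx
      · rw [List.countP_cons]
        simp only [decide_eq_true_eq]
        rw [if_neg (by omega)]
        simpa using hcount
    · by_cases h2 : col v = c
      · rw [show scAux col c (v :: t) = scAux col c t + 1 by simp [scAux, h1, h2]] at h ⊢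
        by_cases h3 : 1 ≤ scAux col c t
        · obtain ⟨r₁, r₂, hr, hall, hcount⟩ := ih h3
          refine ⟨v :: r₁, r₂, by simp [hr], ?_, ?_⟩
          · intro x hx; rcases List.mem_cons.mp hx with rfl | hx
            · omega
            · exact hall x hx
          · rw [List.countP_cons]
            simp only [decide_eq_true_eq]
            rw [if_pos h2]
            omega
        · refine ⟨[v], t, by simp, ?_, ?_⟩
          · intro x hx; simp at hx; subst hx; omega
          · simp [h2]; omega
      · rw [show scAux col c (v :: t) = 0 by simp [scAux, h1, h2]] at h
        omega

end ScLemmas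
section MinInf
variable {V : Type*}

lemma minInfCol_eq (col : V → ℕ) (ρ : ℕ → V) (c : ℕ)
    (hocc : ∀ N, ∃ m, N ≤ m ∧ col (ρ m) = c)
    (hge : ∃ N, ∀ m, N ≤ m → c ≤ col (ρ m)) :
    minInfCol col ρ = c := by
  unfold minInfCol
  have hocc' : c ∈ {c | ∀ N, ∃ m, N ≤ m ∧ col (ρ m) = c} := hocc
  apply le_antisymm (Nat.sInf_le hocc')
  apply le_csInf ⟨c, hocc'⟩
  rintro c' h'
  obtain ⟨N, hN⟩ := hge
  obtain ⟨m, hm, rfl⟩ := h' N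
  exact hN m hm

lemma minInfCol_tail (col : V → ℕ) (ρ : ℕ → V) (N : ℕ) :
    minInfCol col (fun m => ρ (m + N)) = minInfCol col ρ := by
  unfold minInfCol
  congr 1
  ext c
  constructor
  · intro h M
    obtain ⟨m, hm, hc⟩ := h M
    exact ⟨m + N, by omega, hc⟩
  · intro h M
    obtain ⟨m, hm, hc⟩ := h (M + N)
    refine ⟨m - N, by omega, ?_⟩
    simp only []
    rw [show m - N + N = m by omega]
    exact hc

lemma minInfCol_mem [Finite V] (col : V → ℕ) (ρ : ℕ → V) :
    ∀ N, ∃ m, N ≤ m ∧ col (ρ m) = minInfCol col ρ := by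
  have hne : Set.Nonempty {c | ∀ N, ∃ m, N ≤ m ∧ col (ρ m) = c} := by
    obtain ⟨v, hv⟩ := Finite.exists_infinite_fiber ρ
    rw [Set.infinite_coe_iff] at hv
    refine ⟨col v, fun N => ?_⟩
    obtain ⟨m, hm, hlt⟩ := hv.exists_gt N
    exact ⟨m, le_of_lt hlt, by simp [Set.mem_preimage] at hm; rw [hm]⟩
  exact Nat.sInf_mem hne

/-- eventually all colors are at least the minimal infinitely-occurring one. -/
lemma minInfCol_eventually_ge [Finite V] (col : V → ℕ) (ρ : ℕ → V) {n : ℕ}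
    (hcol : ∀ v, col v < n) :
    ∃ N, ∀ m, N ≤ m → minInfCol col ρ ≤ col (ρ m) := by
  set c := minInfCol col ρ with hc
  -- every color below c occurs only finitely often
  have hfin : ∀ c' < c, ∃ N, ∀ m, N ≤ m → col (ρ m) ≠ c' := by
    intro c' hc'
    by_contra h
    push_neg at h
    have hmem : c' ∈ {d | ∀ N, ∃ m, N ≤ m ∧ col (ρ m) = d} := by
      intro N
      obtain ⟨m, hm, he⟩ := h N
      exact ⟨m, hm, he⟩
    have h2 := Nat.sInf_le hmem
    rw [hc] at hc'
    unfold minInfCol at hc'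
    omega
  choose Nf hNf using hfin
  classical
  refine ⟨(Finset.range c).sup (fun c' => if h : c' < c then Nf c' h else 0), fun m hm => ?_⟩
  by_contra hlt
  push_neg at hlt
  have h1 : col (ρ m) < c := hlt
  have h2 : (if h : col (ρ m) < c then Nf (col (ρ m)) h else 0) ≤ m := by
    refine le_trans ?_ hm
    exact Finset.le_sup (f := fun c' => if h : c' < c then Nf c' h else 0)
      (Finset.mem_range.mpr h1)
  rw [dif_pos h1] at h2
  exact hNf (col (ρ m)) h1 m h2 rfl

end MinInf
/-- the "other" player -/
def other (i : Fin 2) : Fin 2 := if i = 0 then 1 else 0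

lemma other_ne (i : Fin 2) : other i ≠ i := by fin_cases i <;> decide

lemma eq_or_other (i j : Fin 2) : j = i ∨ j = other i := by
  fin_cases i <;> fin_cases j <;> simp [other]

lemma coe_ne_coe_other (i : Fin 2) : (i : ℕ) ≠ ((other i : Fin 2) : ℕ) := by
  fin_cases i <;> decide

section Merged
variable {V : Type*} (G : GameGraph V) (i : Fin 2) (σ τ : List V → V → V)

/-- next vertex: the strategy of the owner of the last vertex of `l` applied to
the history `l.dropLast`. -/
def mNext (l : List V) : V :=
  let v := l.getD (l.length - 1) G.vin
  if G.own v = i then σ l.dropLast v else τ l.dropLast v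

/-- the merged play of `σ` (for player `i`) and `τ` (for the other player),
as a sequence of histories. -/
def mergedL : ℕ → List V
  | 0 => [G.vin]
  | m + 1 => mergedL m ++ [mNext G i σ τ (mergedL m)]

lemma mergedL_length (m : ℕ) : (mergedL G i σ τ m).length = m + 1 := by
  induction m with
  | zero => rfl
  | succ m ih => simp [mergedL, ih]

lemma mergedL_ne_nil (m : ℕ) : mergedL G i σ τ m ≠ [] := by
  have := mergedL_length G i σ τ m
  intro h; rw [h] at this; simp at this

lemma mergedL_take (m n : ℕ) (h : m ≤ n) :
    (mergedL G i σ τ n).take (m + 1) = mergedL G i σ τ m := by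
  induction n with
  | zero =>
    interval_cases m
    simp [mergedL]
  | succ n ih =>
    rcases Nat.lt_or_ge m (n + 1) with h' | h'
    · rw [show mergedL G i σ τ (n+1) = mergedL G i σ τ n ++ [mNext G i σ τ (mergedL G i σ τ n)] from rfl]
      rw [List.take_append_of_le_length (by rw [mergedL_length]; omega)]
      exact ih (by omega)
    · have : m = n + 1 := by omega
      subst this
      apply List.take_of_length_le
      rw [mergedL_length]

/-- the merged play as a sequence of vertices -/
def mPlay (m : ℕ) : V := (mergedL G i σ τ m).getD m G.vin

lemma mergedL_getD (m n : ℕ) (h : m ≤ n) :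
    (mergedL G i σ τ n).getD m G.vin = mPlay G i σ τ m := by
  unfold mPlay
  have h1 : (mergedL G i σ τ n).getD m G.vin
      = ((mergedL G i σ τ n).take (m+1)).getD m G.vin := by
    rw [List.getD_eq_getElem?_getD, List.getD_eq_getElem?_getD, List.getElem?_take,
      if_pos (by omega)]
  rw [h1, mergedL_take G i σ τ m n h]

lemma mergedL_last (m : ℕ) :
    (mergedL G i σ τ m).getD ((mergedL G i σ τ m).length - 1) G.vin = mPlay G i σ τ m := by
  rw [mergedL_length]
  simp only [Nat.add_sub_cancel]
  exact mergedL_getD G i σ τ m m le_rfl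

lemma mergedL_dropLast (m : ℕ) :
    (mergedL G i σ τ (m + 1)).dropLast = mergedL G i σ τ m := by
  rw [show mergedL G i σ τ (m+1) = mergedL G i σ τ m ++ [mNext G i σ τ (mergedL G i σ τ m)] from rfl]
  exact List.dropLast_concat ..

lemma mPlay_zero : mPlay G i σ τ 0 = G.vin := rfl

lemma mPlay_succ (m : ℕ) :
    mPlay G i σ τ (m + 1) = mNext G i σ τ (mergedL G i σ τ m) := by
  unfold mPlay
  rw [show mergedL G i σ τ (m+1) = mergedL G i σ τ m ++ [mNext G i σ τ (mergedL G i σ τ m)] from rfl]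
  rw [List.getD_eq_getElem?_getD, List.getElem?_append_right (by rw [mergedL_length])]
  rw [mergedL_length]
  simp

lemma mPlay_succ_eq (m : ℕ) :
    mPlay G i σ τ (m + 1) =
      if G.own (mPlay G i σ τ m) = i
      then σ (mergedL G i σ τ m).dropLast (mPlay G i σ τ m)
      else τ (mergedL G i σ τ m).dropLast (mPlay G i σ τ m) := by
  rw [mPlay_succ]
  unfold mNext
  rw [mergedL_last]

lemma mergedL_eq_map_range (m : ℕ) :
    mergedL G i σ τ m = (List.range (m + 1)).map (mPlay G i σ τ) := by
  apply List.ext_getElem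
  · simp [mergedL_length]
  · intro j h1 h2
    rw [List.getElem_map, List.getElem_range]
    have : (mergedL G i σ τ m)[j] = (mergedL G i σ τ m).getD j G.vin := by
      rw [List.getD_eq_getElem?_getD, List.getElem?_eq_getElem h1]
      rfl
    rw [this, mergedL_getD G i σ τ j m (by rw [mergedL_length] at h1; omega)]

lemma mergedL_dropLast_eq_map (m : ℕ) :
    (mergedL G i σ τ m).dropLast = (List.range m).map (mPlay G i σ τ) := by
  cases m with
  | zero => simp [mergedL]
  | succ m =>
    rw [mergedL_dropLast, mergedL_eq_map_range]

lemma mPlay_isPlay (hσ : IsStrategy G σ) (hτ : IsStrategy G τ) :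
    IsPlay G (mPlay G i σ τ) := by
  constructor
  · rfl
  · intro m
    rw [mPlay_succ_eq]
    split_ifs with h
    · exact hσ _ _
    · exact hτ _ _

lemma mPlay_consistent_self (hσ : IsStrategy G σ) (hτ : IsStrategy G τ) :
    ConsistentPlay G i σ (mPlay G i σ τ) := by
  refine ⟨mPlay_isPlay G i σ τ hσ hτ, fun m hm => ?_⟩
  rw [mPlay_succ_eq, if_pos hm, mergedL_dropLast_eq_map]

lemma mPlay_consistent_other (hσ : IsStrategy G σ) (hτ : IsStrategy G τ) :
    ConsistentPlay G (other i) τ (mPlay G i σ τ) := by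
  refine ⟨mPlay_isPlay G i σ τ hσ hτ, fun m hm => ?_⟩
  have : G.own (mPlay G i σ τ m) ≠ i := by rw [hm]; exact other_ne i
  rw [mPlay_succ_eq, if_neg this, mergedL_dropLast_eq_map]

lemma mergedL_chain' (hσ : IsStrategy G σ) (hτ : IsStrategy G τ) (m : ℕ) :
    (mergedL G i σ τ m).Chain' G.E := by
  induction m with
  | zero => simp [mergedL]; exact List.isChain_singleton _
  | succ m ih =>
    rw [show mergedL G i σ τ (m+1) = mergedL G i σ τ m ++ [mNext G i σ τ (mergedL G i σ τ m)] from rfl]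
    apply List.IsChain.append ih (List.isChain_singleton _)
    intro x hx y hy
    simp only [List.head?_cons, Option.mem_def, Option.some.injEq] at hy
    subst hy
    have hlast : x = mPlay G i σ τ m := by
      have h1 : (mergedL G i σ τ m).getLast? = some x := hx
      rw [List.getLast?_eq_getElem?] at h1
      rw [← mergedL_last G i σ τ m]
      rw [List.getD_eq_getElem?_getD, h1]
      rfl
    subst hlast
    rw [show mNext G i σ τ (mergedL G i σ τ m)= mPlay G i σ τ (m+1) from (mPlay_succ G i σ τ m).symm]
    exact (mPlay_isPlay G i σ τ hσ hτ).2 m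

lemma mergedL_head (m : ℕ) : (mergedL G i σ τ m).head? = some G.vin := by
  induction m with
  | zero => rfl
  | succ m ih =>
    rw [show mergedL G i σ τ (m+1) = mergedL G i σ τ m ++ [mNext G i σ τ (mergedL G i σ τ m)] from rfl]
    rw [List.head?_append_of_ne_nil _ (mergedL_ne_nil G i σ τ m)]
    exact ih

lemma mergedL_finPath (hσ : IsStrategy G σ) (hτ : IsStrategy G τ) (m : ℕ) :
    FinPath G (mergedL G i σ τ m) :=
  ⟨mergedL_head G i σ τ m, mergedL_chain' G i σ τ hσ hτ m⟩

lemma mergedL_finConsistent_self (m : ℕ) :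
    FinConsistent G i σ (mergedL G i σ τ m) := by
  intro p hp hown
  rw [mergedL_length] at hp
  rw [mergedL_getD G i σ τ p m (by omega)] at hown ⊢
  rw [mergedL_getD G i σ τ (p+1) m (by omega)]
  rw [mPlay_succ_eq, if_pos hown]
  congr 1
  -- (mergedL m).take p = (mergedL p).dropLast
  cases p with
  | zero => simp [mergedL]
  | succ p =>
    rw [mergedL_dropLast G i σ τ p]
    exact (mergedL_take G i σ τ p m (by omega)).symm

lemma mergedL_finConsistent_other (m : ℕ) :
    FinConsistent G (other i) τ (mergedL G i σ τ m) := by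
  intro p hp hown
  rw [mergedL_length] at hp
  rw [mergedL_getD G i σ τ p m (by omega)] at hown ⊢
  rw [mergedL_getD G i σ τ (p+1) m (by omega)]
  have hni : G.own (mPlay G i σ τ p) ≠ i := by rw [hown]; exact other_ne i
  rw [mPlay_succ_eq, if_neg hni]
  congr 1
  cases p with
  | zero => simp [mergedL]
  | succ p =>
    rw [mergedL_dropLast G i σ τ p]
    exact (mergedL_take G i σ τ p m (by omega)).symm

end Merged

section Uniqueness
variable {V : Type*}

/-- Two opposing winning strategies in the parity game are contradictory. -/
lemma parity_unique (G : GameGraph V) (col : V → ℕ) (i : Fin 2)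
    {σ τ : List V → V → V}
    (hσ : WinningStrategy G col i σ) (hτ : WinningStrategy G col (other i) τ) : False := by
  have h1 := hσ.2 _ (mPlay_consistent_self G i σ τ hσ.1 hτ.1)
  have h2 := hτ.2 _ (mPlay_consistent_other G i σ τ hσ.1 hτ.1)
  unfold WinningPlay at h1 h2
  exact coe_ne_coe_other i (h1 ▸ h2 ▸ rfl)

/-- In a finite arena, the merged play of two legal strategies eventually
completes a finite-time play. -/
lemma merged_terminates [Fintype V] (G : GameGraph V) (col : V → ℕ) (n k : ℕ)
    (hcol : ∀ v, col v < n) (hk : 1 ≤ k) (i : Fin 2) (σ τ : List V → V → V)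
    (hσ : IsStrategy G σ) (hτ : IsStrategy G τ) :
    ∃ T, FTPlay G col n k (mergedL G i σ τ T) := by
  classical
  set ρ := mPlay G i σ τ with hρ
  set c := minInfCol col ρ with hc
  have hcn : c < n := by
    obtain ⟨m, _, hm⟩ := minInfCol_mem col ρ 0
    rw [hc, ← hm]; exact hcol _
  obtain ⟨N, hN⟩ := minInfCol_eventually_ge col ρ (n := n) hcol
  -- Sc of color c is monotone from N on
  have hmono : ∀ a b, N ≤ a → a ≤ b → Sc col c (mergedL G i σ τ a) ≤ Sc col c (mergedL G i σ τ b) := by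
    intro a b ha hab
    induction b with
    | zero => interval_cases a; omega
    | succ b ih =>
      rcases Nat.lt_or_ge a (b+1) with h' | h'
      · refine le_trans (ih (by omega)) ?_
        rw [show mergedL G i σ τ (b+1) = mergedL G i σ τ b ++ [mNext G i σ τ (mergedL G i σ τ b)] from rfl]
        rw [Sc_concat]
        have hge : c ≤ col (mNext G i σ τ (mergedL G i σ τ b)) := by
          rw [show mNext G i σ τ (mergedL G i σ τ b) = ρ (b+1) from (mPlay_succ G i σ τ b).symm]
          exact hN _ (by omega)
        split_ifs with h1 h2 <;> omega
      · have : a = b + 1 := by omega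
        subst this; rfl
  -- Sc of color c is unbounded
  have hunb : ∀ j, ∃ m, N ≤ m ∧ j ≤ Sc col c (mergedL G i σ τ m) := by
    intro j
    induction j with
    | zero => exact ⟨N, le_rfl, by omega⟩
    | succ j ih =>
      obtain ⟨m, hmN, hm⟩ := ih
      obtain ⟨m', hm', hcolm'⟩ := minInfCol_mem col ρ (m + 1)
      refine ⟨m', by omega, ?_⟩
      have hstep : Sc col c (mergedL G i σ τ m') = Sc col c (mergedL G i σ τ (m' - 1)) + 1 := by
        have hm'1 : m' - 1 + 1 = m' := by omega
        conv_lhs => rw [← hm'1]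
        rw [show mergedL G i σ τ (m'-1+1) = mergedL G i σ τ (m'-1) ++ [mNext G i σ τ (mergedL G i σ τ (m'-1))] from rfl]
        rw [Sc_concat]
        have hcc : col (mNext G i σ τ (mergedL G i σ τ (m'-1))) = c := by
          rw [show mNext G i σ τ (mergedL G i σ τ (m'-1)) = ρ (m'-1+1) from (mPlay_succ G i σ τ (m'-1)).symm]
          rw [hm'1]; exact hcolm'
        rw [if_neg (by omega), if_pos hcc]
      have := hmono m (m' - 1) hmN (by omega)
      omega
  -- least T where some color reaches score k
  have hex : ∃ T, ∃ c' < n, k ≤ MaxSc col c' (mergedL G i σ τ T) := by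
    obtain ⟨m, _, hm⟩ := hunb k
    exact ⟨m, c, hcn, le_trans hm (Sc_le_MaxSc col c _)⟩
  obtain ⟨T, ⟨c', hc'n, hc'⟩, hmin'⟩ :
      ∃ T, (∃ c' < n, k ≤ MaxSc col c' (mergedL G i σ τ T)) ∧
        ∀ t < T, ¬ ∃ c' < n, k ≤ MaxSc col c' (mergedL G i σ τ t) :=
    ⟨Nat.find hex, Nat.find_spec hex, fun t ht => Nat.find_min hex ht⟩
  have hmin : ∀ t < T, ∀ c'' < n, MaxSc col c'' (mergedL G i σ τ t) < k := by
    intro t ht c'' hc''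
    by_contra h
    push_neg at h
    exact hmin' t ht ⟨c'', hc'', h⟩
  refine ⟨T, mergedL_finPath G i σ τ hσ hτ T, ⟨c', hc'n, ?_⟩, ?_⟩
  · -- MaxSc = k exactly
    apply le_antisymm _ hc'
    cases hT' : T with
    | zero =>
      -- mergedL 0 = [vin]
      have : MaxSc col c' (mergedL G i σ τ 0) ≤ 1 := by
        rw [show mergedL G i σ τ 0 = [] ++ [G.vin] from rfl, MaxSc_concat]
        have h1 := Sc_concat_le col c' ([] : List V) G.vin
        rw [MaxSc_nil]
        rw [Sc_nil] at h1
        omega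
      omega
    | succ t =>
      have h1 : MaxSc col c' (mergedL G i σ τ t) < k := hmin t (by omega) c' hc'n
      calc MaxSc col c' (mergedL G i σ τ (t+1))
          ≤ MaxSc col c' (mergedL G i σ τ t) + 1 := by
            rw [show mergedL G i σ τ (t+1) = mergedL G i σ τ t ++ [mNext G i σ τ (mergedL G i σ τ t)] from rfl]
            exact MaxSc_concat_le ..
        _ ≤ k := by omega
  · intro c'' hc''
    cases hT' : T with
    | zero =>
      rw [show mergedL G i σ τ 0 = [G.vin] from rfl]
      show MaxSc col c'' ([G.vin].dropLast) < k
      simp only [List.dropLast_singleton]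
      rw [MaxSc_nil]; omega
    | succ t =>
      rw [mergedL_dropLast]
      exact hmin t (by omega) c'' hc''

/-- only the color of the last vertex can complete a finite-time play. -/
lemma FT_color_unique [Fintype V] (G : GameGraph V) (col : V → ℕ) (n k : ℕ)
    (hk : 1 ≤ k) {w : List V} (hw : w ≠ [])
    (hplay : FTPlay G col n k w) {c : ℕ} (hcn : c < n) (hck : MaxSc col c w = k) :
    col (w.getLast hw) = c :=
  (Sc_eq_and_color col c hw hk hck (hplay.2.2 c hcn)).2

/-- Two opposing winning strategies in the finite-time game are contradictory. -/
lemma FT_unique [Fintype V] (G : GameGraph V) (col : V → ℕ) (n k : ℕ)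
    (hcol : ∀ v, col v < n) (hk : 1 ≤ k) (i : Fin 2)
    (h1 : FTWins G col n k i) (h2 : FTWins G col n k (other i)) : False := by
  obtain ⟨σ, hσ, hσw⟩ := h1
  obtain ⟨τ, hτ, hτw⟩ := h2
  obtain ⟨T, hT⟩ := merged_terminates G col n k hcol hk i σ τ hσ hτ
  have hne := mergedL_ne_nil G i σ τ T
  obtain ⟨c1, hc1n, hc1, hc1p⟩ := hσw _ hT (mergedL_finConsistent_self G i σ τ T)
  obtain ⟨c2, hc2n, hc2, hc2p⟩ := hτw _ hT (mergedL_finConsistent_other G i σ τ T)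
  have e1 := FT_color_unique G col n k hk hne hT hc1n hc1
  have e2 := FT_color_unique G col n k hk hne hT hc2n hc2
  rw [← e1, e2] at hc1p
  rw [hc1p] at hc2p
  exact coe_ne_coe_other i hc2p

end Uniqueness

section Attractor
/-- one step of the attractor construction for player `j` in arena `U`. -/
def attrStep {V : Type*} (E : V → V → Prop) (own : V → Fin 2)
    (j : Fin 2) (U A : Set V) : Set V :=
  A ∪ {v ∈ U | (own v = j ∧ ∃ w ∈ A, E v w) ∨ (own v ≠ j ∧ ∀ w ∈ U, E v w → w ∈ A)}

/-- attractor levels -/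
def attrN {V : Type*} (E : V → V → Prop) (own : V → Fin 2)
    (j : Fin 2) (U T : Set V) : ℕ → Set V
  | 0 => T
  | p + 1 => attrStep E own j U (attrN E own j U T p)

/-- the attractor of `T` for player `j` in arena `U`. -/
def attr {V : Type*} [Fintype V] (E : V → V → Prop) (own : V → Fin 2)
    (j : Fin 2) (U T : Set V) : Set V :=
  attrN E own j U T (Fintype.card V)

variable {V : Type*} [Fintype V] (E : V → V → Prop) (own : V → Fin 2)
  (j : Fin 2) (U T : Set V)

lemma mem_attrStep (A : Set V) (v : V) :
    v ∈ attrStep E own j U A ↔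
      v ∈ A ∨ (v ∈ U ∧ ((own v = j ∧ ∃ w ∈ A, E v w) ∨
        (own v ≠ j ∧ ∀ w ∈ U, E v w → w ∈ A))) := Iff.rfl

lemma subset_attrStep (A : Set V) : A ⊆ attrStep E own j U A := by
  intro v hv
  exact Or.inl hv

lemma attrStep_mono {A B : Set V} (h : A ⊆ B) :
    attrStep E own j U A ⊆ attrStep E own j U B := by
  intro v hv
  rcases hv with hv | ⟨hvU, hv⟩
  · exact Or.inl (h hv)
  · refine Or.inr ⟨hvU, ?_⟩
    rcases hv with ⟨h1, w, hw, he⟩ | ⟨h1, h2⟩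
    · exact Or.inl ⟨h1, w, h hw, he⟩
    · exact Or.inr ⟨h1, fun w hwU hE => h (h2 w hwU hE)⟩

lemma attrN_mono_succ (p : ℕ) : attrN E own j U T p ⊆ attrN E own j U T (p + 1) :=
  subset_attrStep ..

lemma attrN_mono {p q : ℕ} (h : p ≤ q) : attrN E own j U T p ⊆ attrN E own j U T q := by
  induction q with
  | zero => have : p = 0 := by omega
            subst this; rfl
  | succ q ih =>
    rcases Nat.lt_or_ge p (q + 1) with h' | h'
    · exact subset_trans (ih (by omega)) (attrN_mono_succ ..)
    · have : p = q + 1 := by omega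
      subst this; rfl

lemma attrN_subset (hT : T ⊆ U) (p : ℕ) : attrN E own j U T p ⊆ U := by
  induction p with
  | zero => exact hT
  | succ p ih =>
    intro v hv
    rcases hv with hv | hv
    · exact ih hv
    · exact hv.1

lemma subset_attr : T ⊆ attr E own j U T :=
  attrN_mono E own j U T (Nat.zero_le _)

lemma attr_subset (hT : T ⊆ U) : attr E own j U T ⊆ U := attrN_subset E own j U T hT _

/-- the attractor is a fixed point of the attractor step. -/
lemma attrStep_attr : attrStep E own j U (attr E own j U T) = attr E own j U T := by
  have key : ∃ p ≤ Fintype.card V, attrN E own j U T (p + 1) = attrN E own j U T p := by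
    by_contra h
    push_neg at h
    have hcard : ∀ p, p ≤ Fintype.card V + 1 → p ≤ (attrN E own j U T p).ncard := by
      intro p hp
      induction p with
      | zero => omega
      | succ p ih =>
        have hsub := attrN_mono_succ E own j U T p
        have hne : attrN E own j U T p ≠ attrN E own j U T (p + 1) :=
          fun he => h p (by omega) he.symm
        have h1 : attrN E own j U T p ⊂ attrN E own j U T (p + 1) :=
          Set.ssubset_iff_subset_ne.mpr ⟨hsub, hne⟩
        have h2 := Set.ncard_lt_ncard h1 (Set.toFinite _)
        have h3 := ih (by omega)
        omega
    have h2 := hcard (Fintype.card V + 1) le_rfl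
    have h3 : (attrN E own j U T (Fintype.card V + 1)).ncard ≤ Fintype.card V := by
      have := Set.ncard_le_ncard (Set.subset_univ (attrN E own j U T (Fintype.card V + 1)))
        (Set.toFinite _)
      rwa [Set.ncard_univ, Nat.card_eq_fintype_card] at this
    omega
  obtain ⟨p, hp, hfix⟩ := key
  have hstab : ∀ q, p ≤ q → attrN E own j U T q = attrN E own j U T p := by
    intro q hq
    induction q with
    | zero => have : p = 0 := by omega
              subst this; rfl
    | succ q ih =>
      rcases Nat.lt_or_ge p (q + 1) with h' | h'
      · have hq' := ih (by omega)
        show attrStep E own j U (attrN E own j U T q) = _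
        rw [hq']
        exact hfix
      · have : p = q + 1 := by omega
        subst this; rfl
  show attrStep E own j U (attrN E own j U T (Fintype.card V))
      = attrN E own j U T (Fintype.card V)
  rw [hstab (Fintype.card V) hp]
  exact hfix

/-- closure: a `j`-vertex with a successor in the attractor is in the attractor. -/
lemma attr_closed_own {v w : V} (hv : v ∈ U) (ho : own v = j)
    (he : E v w) (hw : w ∈ attr E own j U T) : v ∈ attr E own j U T := by
  rw [← attrStep_attr E own j U T]
  exact Or.inr ⟨hv, Or.inl ⟨ho, w, hw, he⟩⟩

/-- closure: a non-`j`-vertex all of whose `U`-successors are in the attractor. -/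
lemma attr_closed_opp {v : V} (hv : v ∈ U) (ho : own v ≠ j)
    (h : ∀ w ∈ U, E v w → w ∈ attr E own j U T) : v ∈ attr E own j U T := by
  rw [← attrStep_attr E own j U T]
  exact Or.inr ⟨hv, Or.inr ⟨ho, h⟩⟩

/-- the complement of the attractor is a total sub-arena. -/
lemma attr_compl_total (hU : ∀ v ∈ U, ∃ w ∈ U, E v w) :
    ∀ v ∈ U \ attr E own j U T, ∃ w ∈ U \ attr E own j U T, E v w := by
  intro v hv
  obtain ⟨hvU, hvA⟩ := hv
  by_cases ho : own v = j
  · obtain ⟨w, hwU, he⟩ := hU v hvU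
    refine ⟨w, ⟨hwU, fun hwA => hvA ?_⟩, he⟩
    exact attr_closed_own E own j U T hvU ho he hwA
  · by_contra h
    push_neg at h
    apply hvA
    apply attr_closed_opp E own j U T hvU ho
    intro w hwU he
    by_contra hwA
    exact h w ⟨hwU, hwA⟩ he

/-- no `j`-edge leaves the complement of the `j`-attractor into it. -/
lemma attr_no_escape {v w : V} (hv : v ∈ U) (hvA : v ∉ attr E own j U T)
    (ho : own v = j) (he : E v w) : w ∉ attr E own j U T :=
  fun hw => hvA (attr_closed_own E own j U T hv ho he hw)

open Classical in
noncomputable def attrRank (v : V) : ℕ :=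
  if h : ∃ p, v ∈ attrN E own j U T p then Nat.find h else 0

lemma attrRank_spec {v : V} (hv : v ∈ attr E own j U T) :
    v ∈ attrN E own j U T (attrRank E own j U T v) ∧
      (∀ q < attrRank E own j U T v, v ∉ attrN E own j U T q) := by
  classical
  have h : ∃ p, v ∈ attrN E own j U T p := ⟨_, hv⟩
  unfold attrRank
  rw [dif_pos h]
  exact ⟨Nat.find_spec h, fun q hq => Nat.find_min h hq⟩

lemma attrRank_le {v : V} (hv : v ∈ attr E own j U T) :
    attrRank E own j U T v ≤ Fintype.card V := by
  classical
  have h : ∃ p, v ∈ attrN E own j U T p := ⟨_, hv⟩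
  unfold attrRank
  rw [dif_pos h]
  exact Nat.find_le hv

lemma attrRank_zero_mem {v : V} (hv : v ∈ attr E own j U T)
    (h0 : attrRank E own j U T v = 0) : v ∈ T := by
  have := (attrRank_spec E own j U T hv).1
  rw [h0] at this
  exact this

/-- peeling one level: a non-target attractor vertex got in through the step. -/
lemma attr_peel {v : V} (hv : v ∈ attr E own j U T) (hvT : v ∉ T) :
    v ∈ U ∧ attrRank E own j U T v ≠ 0 ∧
    ((own v = j ∧ ∃ w, E v w ∧ w ∈ attrN E own j U T (attrRank E own j U T v - 1)) ∨
     (own v ≠ j ∧ ∀ w ∈ U, E v w → w ∈ attrN E own j U T (attrRank E own j U T v - 1))) := by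
  obtain ⟨h1, h2⟩ := attrRank_spec E own j U T hv
  set r := attrRank E own j U T v with hr
  have hrne : r ≠ 0 := by
    intro h0
    exact hvT (attrRank_zero_mem E own j U T hv h0)
  have hrsucc : r - 1 + 1 = r := by omega
  rw [← hrsucc] at h1
  have hnot : v ∉ attrN E own j U T (r - 1) := h2 _ (by omega)
  have h1' : v ∈ attrStep E own j U (attrN E own j U T (r - 1)) := h1
  rcases h1' with h | ⟨hvU, h⟩
  · exact absurd h hnot
  · refine ⟨hvU, hrne, ?_⟩
    rcases h with ⟨ho, w, hw, he⟩ | ⟨ho, hall⟩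
    · exact Or.inl ⟨ho, w, he, hw⟩
    · exact Or.inr ⟨ho, hall⟩

lemma attrN_rank_mem_attr {w : V} {p : ℕ} (hp : p ≤ Fintype.card V)
    (h : w ∈ attrN E own j U T p) : w ∈ attr E own j U T :=
  attrN_mono E own j U T hp h

lemma attrRank_lt_of_mem {w : V} {p : ℕ} (h : w ∈ attrN E own j U T p) :
    attrRank E own j U T w ≤ p := by
  classical
  have hex : ∃ q, w ∈ attrN E own j U T q := ⟨p, h⟩
  unfold attrRank
  rw [dif_pos hex]
  exact Nat.find_le h

open Classical in
/-- the attractor strategy -/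
noncomputable def attrStrat (fb : V → V) (v : V) : V :=
  if h : ∃ w, E v w ∧ w ∈ attrN E own j U T (attrRank E own j U T v - 1)
  then h.choose else fb v

lemma attrStrat_spec (fb : V → V) {v : V} (hv : v ∈ attr E own j U T) (hvT : v ∉ T)
    (ho : own v = j) :
    E v (attrStrat E own j U T fb v) ∧ attrStrat E own j U T fb v ∈ attr E own j U T ∧
      attrRank E own j U T (attrStrat E own j U T fb v) < attrRank E own j U T v := by
  obtain ⟨hvU, hrne, hcase⟩ := attr_peel E own j U T hv hvT
  classical
  rcases hcase with ⟨_, w, he, hw⟩ | ⟨ho', _⟩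
  · have hex : ∃ w, E v w ∧ w ∈ attrN E own j U T (attrRank E own j U T v - 1) := ⟨w, he, hw⟩
    unfold attrStrat
    rw [dif_pos hex]
    obtain ⟨he', hw'⟩ := hex.choose_spec
    have hle := attrRank_lt_of_mem E own j U T hw'
    refine ⟨he', ?_, by omega⟩
    apply attrN_rank_mem_attr E own j U T (p := attrRank E own j U T v - 1) ?_ hw'
    have := attrRank_le E own j U T hv
    omega
  · exact absurd ho ho'

/-- any play staying in `U`, following the attractor strategy at `j`-vertices
inside the attractor, reaches the target. -/
lemma attr_reach (fb : V → V) (ρ : ℕ → V)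
    (h0 : ρ 0 ∈ attr E own j U T)
    (hmem : ∀ m, ρ m ∈ U)
    (hedge : ∀ m, E (ρ m) (ρ (m + 1)))
    (hstrat : ∀ m, ρ m ∈ attr E own j U T → ρ m ∉ T → own (ρ m) = j →
      ρ (m + 1) = attrStrat E own j U T fb (ρ m)) :
    ∃ t, ρ t ∈ T := by
  by_contra hnone
  push_neg at hnone
  have key : ∀ m, ρ m ∈ attr E own j U T →
      ρ (m+1) ∈ attr E own j U T ∧
        attrRank E own j U T (ρ (m+1)) < attrRank E own j U T (ρ m) := by
    intro m hm
    by_cases ho : own (ρ m) = j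
    · have := attrStrat_spec E own j U T fb hm (hnone m) ho
      rw [← hstrat m hm (hnone m) ho] at this
      exact ⟨this.2.1, this.2.2⟩
    · obtain ⟨_, hrne, hcase⟩ := attr_peel E own j U T hm (hnone m)
      rcases hcase with ⟨ho', _⟩ | ⟨_, hall⟩
      · exact absurd ho' ho
      · have hw := hall _ (hmem (m+1)) (hedge m)
        have hle := attrRank_lt_of_mem E own j U T hw
        refine ⟨attrN_rank_mem_attr E own j U T
          (p := attrRank E own j U T (ρ m) - 1) ?_ hw, by omega⟩
        have := attrRank_le E own j U T hm
        omega
  have hall : ∀ m, ρ m ∈ attr E own j U T := by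
    intro m
    induction m with
    | zero => exact h0
    | succ m ih => exact (key m ih).1
  have hdec : ∀ m, attrRank E own j U T (ρ (m+1)) < attrRank E own j U T (ρ m) :=
    fun m => (key m (hall m)).2
  have hsum : ∀ m, attrRank E own j U T (ρ m) + m ≤ attrRank E own j U T (ρ 0) := by
    intro m
    induction m with
    | zero => omega
    | succ m ih => have := hdec m; omega
  have h1 := hsum (attrRank E own j U T (ρ 0) + 1)
  omega

end Attractor

section Zielonka

lemma eq_other_of_ne {a i : Fin 2} (h : a ≠ i) : a = other i := by
  fin_cases a <;> fin_cases i <;> simp_all [other]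

lemma eq_of_ne_other {a i : Fin 2} (h : a ≠ other i) : a = i := by
  fin_cases a <;> fin_cases i <;> simp_all [other]

lemma union_other {V : Type*} (f : Fin 2 → Set V) (i : Fin 2) :
    f i ∪ f (other i) = f 0 ∪ f 1 := by
  fin_cases i <;> simp [other, Set.union_comm]

open Classical in
noncomputable def fbStrat {V : Type*} (E : V → V → Prop) (U : Set V) : V → V :=
  fun v => if h : ∃ w ∈ U, E v w then h.choose else v

lemma fbStrat_spec {V : Type*} (E : V → V → Prop) (U : Set V)
    (hU : ∀ v ∈ U, ∃ w ∈ U, E v w) {v : V} (hv : v ∈ U) :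
    E v (fbStrat E U v) ∧ fbStrat E U v ∈ U := by
  classical
  have h : ∃ w ∈ U, E v w := hU v hv
  unfold fbStrat
  rw [dif_pos h]
  obtain ⟨h1, h2⟩ := h.choose_spec
  exact ⟨h2, h1⟩

variable {V : Type*} [Fintype V] (E : V → V → Prop) (own : V → Fin 2) (col : V → ℕ)

lemma attrStrat_edge_mem (j : Fin 2) (U T : Set V) (hT : T ⊆ U) (fb : V → V)
    (hfb : ∀ v ∈ U, E v (fb v) ∧ fb v ∈ U) {v : V} (hv : v ∈ U) :
    E v (attrStrat E own j U T fb v) ∧ attrStrat E own j U T fb v ∈ U := by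
  classical
  unfold attrStrat
  split_ifs with h
  · obtain ⟨h1, h2⟩ := h.choose_spec
    exact ⟨h1, attrN_subset E own j U T hT _ h2⟩
  · exact hfb v hv

lemma attr_forced (j : Fin 2) (U T : Set V) {v : V} (hv : v ∈ attr E own j U T)
    (hvT : v ∉ T) (ho : own v ≠ j) :
    ∀ w ∈ U, E v w → w ∈ attr E own j U T := by
  intro w hw he
  obtain ⟨_, hrne, hcase⟩ := attr_peel E own j U T hv hvT
  rcases hcase with ⟨ho', _⟩ | ⟨_, hall⟩
  · exact absurd ho' ho
  · have h1 := hall w hw he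
    apply attrN_mono E own j U T (p := attrRank E own j U T v - 1) ?_ h1
    have := attrRank_le E own j U T hv
    omega

/-- `W` is a winning region with positional strategy `s` for player `i` in the
sub-arena `U`. -/
def RegWin (U : Set V) (i : Fin 2) (s : V → V) (W : Set V) : Prop :=
  W ⊆ U ∧
  (∀ v ∈ W, own v = i → E v (s v) ∧ s v ∈ W) ∧
  (∀ v ∈ W, own v ≠ i → ∀ v' ∈ U, E v v' → v' ∈ W) ∧
  (∀ ρ : ℕ → V, (∀ m, ρ m ∈ W) → (∀ m, E (ρ m) (ρ (m + 1))) →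
    (∀ m, own (ρ m) = i → ρ (m + 1) = s (ρ m)) → minInfCol col ρ % 2 = (i : ℕ))

lemma regWin_empty (U : Set V) (i : Fin 2) (s : V → V) :
    RegWin E own col U i s ∅ :=
  ⟨Set.empty_subset U, fun v hv => absurd hv (Set.notMem_empty v),
   fun v hv => absurd hv (Set.notMem_empty v),
   fun ρ hmem => absurd (hmem 0) (Set.notMem_empty _)⟩

/-- Zielonka's theorem: positional determinacy on finite arenas. -/
theorem zielonka : ∀ (N : ℕ) (U : Set V), U.ncard ≤ N → (∀ v ∈ U, ∃ w ∈ U, E v w) →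
    ∃ (W : Fin 2 → Set V) (s : Fin 2 → V → V),
      W 0 ∪ W 1 = U ∧ ∀ i, RegWin E own col U i (s i) (W i) := by
  intro N
  induction N with
  | zero =>
    intro U hcard _
    have hU : U = ∅ := by
      rw [← Set.ncard_eq_zero (Set.toFinite U)]
      omega
    subst hU
    exact ⟨fun _ => ∅, fun _ => id, by simp, fun i => regWin_empty E own col ∅ i id⟩
  | succ N ih =>
    intro U hcard hUtot
    classical
    rcases Set.eq_empty_or_nonempty U with rfl | hne
    · exact ⟨fun _ => ∅, fun _ => id, by simp, fun i => regWin_empty E own col ∅ i id⟩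
    -- minimal color in U
    have hcolne : {d | ∃ v ∈ U, col v = d}.Nonempty := by
      obtain ⟨v, hv⟩ := hne
      exact ⟨col v, v, hv, rfl⟩
    set c := sInf {d | ∃ v ∈ U, col v = d} with hc
    obtain ⟨v₀, hv₀U, hv₀c⟩ := Nat.sInf_mem hcolne
    have hcmin : ∀ v ∈ U, c ≤ col v := fun v hv => Nat.sInf_le ⟨v, hv, rfl⟩
    set i : Fin 2 := ⟨c % 2, by omega⟩ with hidef
    have hi : (i : ℕ) = c % 2 := rfl
    set o := other i with ho
    set C := {v ∈ U | col v = c} with hC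
    have hCU : C ⊆ U := fun v hv => hv.1
    set A := attr E own i U C with hA
    have hCA : C ⊆ A := subset_attr E own i U C
    have hAU : A ⊆ U := attr_subset E own i U C hCU
    set U' := U \ A with hU'
    have hU'tot : ∀ v ∈ U', ∃ w ∈ U', E v w := attr_compl_total E own i U C hUtot
    have hv₀A : v₀ ∈ A := hCA ⟨hv₀U, hv₀c⟩
    have hU'card : U'.ncard ≤ N := by
      have hss : U' ⊂ U := by
        constructor
        · exact Set.diff_subset
        · intro hsub
          exact (hsub hv₀U).2 hv₀A
      have := Set.ncard_lt_ncard hss (Set.toFinite U)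
      omega
    obtain ⟨W', s', hW'union, hW'reg⟩ := ih U' hU'card hU'tot
    -- the fallback strategy
    set fb := fbStrat E U with hfb
    have hfbs : ∀ v ∈ U, E v (fb v) ∧ fb v ∈ U := fun v hv => fbStrat_spec E U hUtot hv
    by_cases hcase : W' o = ∅
    · -- Case 1: player i wins everywhere in U
      have hWi' : W' i = U' := by
        have h1 := union_other W' i
        rw [hcase, Set.union_empty] at h1
        rw [h1, hW'union]
      set sA := attrStrat E own i U C fb with hsA
      set sI := fun v => if v ∈ A then sA v else s' i v with hsI
      have hreg : RegWin E own col U i sI U := by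
        refine ⟨le_refl U, ?_, ?_, ?_⟩
        · intro v hv hown
          by_cases hvA : v ∈ A
          · rw [hsI]
            simp only [if_pos hvA]
            exact attrStrat_edge_mem E own i U C hCU fb hfbs hv
          · have hvW : v ∈ W' i := by rw [hWi']; exact ⟨hv, hvA⟩
            have := (hW'reg i).2.1 v hvW hown
            rw [hsI]
            simp only [if_neg hvA]
            exact ⟨this.1, ((hW'reg i).1 this.2).1⟩
        · intro v _ _ v' hv' _
          exact hv'
        · intro ρ hmem hedge hstrat
          by_cases hinf : ∀ M, ∃ m, M ≤ m ∧ ρ m ∈ A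
          · -- infinitely often in A ⇒ infinitely often color c
            have hoccC : ∀ M, ∃ m, M ≤ m ∧ ρ m ∈ C := by
              intro M
              obtain ⟨m, hMm, hmA⟩ := hinf M
              have hreach := attr_reach E own i U C fb (fun t => ρ (t + m)) (by simpa using hmA)
                (fun t => hmem (t + m))
                (fun t => by
                  have := hedge (t + m)
                  simpa [show t + m + 1 = t + 1 + m by omega] using this)
                (fun t htA _ hto => by
                  have h1 := hstrat (t + m) hto
                  have h2 : ρ (t + m + 1) = sA (ρ (t + m)) := by
                    rw [h1, hsI]
                    exact if_pos htA
                  simpa [show t + m + 1 = t + 1 + m by omega] using h2)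
              obtain ⟨t, htC⟩ := hreach
              exact ⟨t + m, by omega, htC⟩
            have hmin : minInfCol col ρ = c := by
              apply minInfCol_eq
              · intro M
                obtain ⟨m, hMm, hmC⟩ := hoccC M
                exact ⟨m, hMm, hmC.2⟩
              · exact ⟨0, fun m _ => hcmin (ρ m) (hmem m)⟩
            rw [hmin, hi]
          · -- eventually stays in U' = W' i
            push_neg at hinf
            obtain ⟨M, hM⟩ := hinf
            have hmem' : ∀ t, ρ (t + M) ∈ W' i := by
              intro t
              rw [hWi']
              exact ⟨hmem (t + M), hM (t + M) (by omega)⟩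
            have hplay := (hW'reg i).2.2.2 (fun t => ρ (t + M)) hmem'
              (fun t => by
                have := hedge (t + M)
                simpa [show t + M + 1 = t + 1 + M by omega] using this)
              (fun t hto => by
                have h1 := hstrat (t + M) hto
                have h2 : ρ (t + M) ∉ A := hM (t + M) (by omega)
                have h3 : ρ (t + M + 1) = s' i (ρ (t + M)) := by
                  rw [h1, hsI]
                  simp only [if_neg h2]
                simpa [show t + M + 1 = t + 1 + M by omega] using h3)
            rwa [minInfCol_tail col ρ M] at hplay
      refine ⟨fun j => if j = i then U else ∅, fun j => if j = i then sI else id, ?_, ?_⟩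
      · by_cases h0 : i = 0
        · simp [h0]
        · have h1 : i = 1 := Fin.ext (by
            have h2 := i.isLt
            have h3 : (i : ℕ) ≠ 0 := fun hh => h0 (Fin.ext hh)
            omega)
          simp [h1]
      · intro j
        rcases eq_or_other i j with rfl | rfl
        · simpa using hreg
        · simp only [if_neg (other_ne i)]
          exact regWin_empty E own col U (other i) id
    · -- Case 2
      set X := W' o with hX
      have hXU' : X ⊆ U' := (hW'reg o).1
      have hXU : X ⊆ U := hXU'.trans Set.diff_subset
      set B := attr E own o U X with hB
      have hXB : X ⊆ B := subset_attr E own o U X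
      have hBU : B ⊆ U := attr_subset E own o U X hXU
      set U'' := U \ B with hU''
      have hU''tot : ∀ v ∈ U'', ∃ w ∈ U'', E v w := attr_compl_total E own o U X hUtot
      obtain ⟨x₀, hx₀⟩ := Set.nonempty_iff_ne_empty.mpr hcase
      have hU''card : U''.ncard ≤ N := by
        have hss : U'' ⊂ U := by
          constructor
          · exact Set.diff_subset
          · intro hsub
            exact (hsub (hXU hx₀)).2 (hXB hx₀)
        have := Set.ncard_lt_ncard hss (Set.toFinite U)
        omega
      obtain ⟨W'', s'', hW''union, hW''reg⟩ := ih U'' hU''card hU''tot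
      set sB := attrStrat E own o U X fb with hsB
      set sO := fun v => if v ∈ X then s' o v else if v ∈ B then sB v else s'' o v with hsO
      -- X is absorbing for combined play
      have hXtrap : ∀ v ∈ X, own v ≠ o → ∀ v' ∈ U, E v v' → v' ∈ X := by
        intro v hv hown v' hv' he
        have hvi : own v = i := eq_of_ne_other hown
        have hvA : v ∉ A := (hXU' hv).2
        have hv'A : v' ∉ A := attr_no_escape E own i U C (hXU hv) hvA hvi he
        exact (hW'reg o).2.2.1 v hv hown v' ⟨hv', hv'A⟩ he
      -- B is absorbing
      have hBtrapI : ∀ v ∈ B, v ∉ X → own v ≠ o → ∀ v' ∈ U, E v v' → v' ∈ B := by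
        intro v hv hvX hown v' hv' he
        exact attr_forced E own o U X hv hvX hown v' hv' he
      have hregI : RegWin E own col U i (s'' i) (W'' i) := by
        refine ⟨(hW''reg i).1.trans Set.diff_subset, (hW''reg i).2.1, ?_, (hW''reg i).2.2.2⟩
        · intro v hv hown v' hv' he
          have hvU : v ∈ U := (hW''reg i).1.trans Set.diff_subset hv
          have hvo : own v = o := eq_other_of_ne hown
          have hv'B : v' ∉ B := by
            intro hv'B
            have : v ∈ B := attr_closed_own E own o U X hvU hvo he hv'B
            exact ((hW''reg i).1 hv).2 this
          exact (hW''reg i).2.2.1 v hv hown v' ⟨hv', hv'B⟩ he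
      have hregO : RegWin E own col U o sO (B ∪ W'' o) := by
        refine ⟨?_, ?_, ?_, ?_⟩
        · intro v hv
          rcases hv with hv | hv
          · exact hBU hv
          · exact (hW''reg o).1.trans Set.diff_subset hv
        · -- o's strategy stays inside
          intro v hv hown
          rcases Classical.em (v ∈ X) with hvX | hvX
          · have h1 := (hW'reg o).2.1 v hvX hown
            rw [hsO]
            simp only [if_pos hvX]
            exact ⟨h1.1, Or.inl (hXB h1.2)⟩
          · rcases hv with hvB | hvW
            · have h1 := attrStrat_spec E own o U X fb hvB hvX hown
              rw [hsO]
              simp only [if_neg hvX, if_pos hvB]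
              exact ⟨h1.1, Or.inl h1.2.1⟩
            · have hvB : v ∉ B := fun h => ((hW''reg o).1 hvW).2 h
              have h1 := (hW''reg o).2.1 v hvW hown
              rw [hsO]
              simp only [if_neg hvX, if_neg hvB]
              exact ⟨h1.1, Or.inr h1.2⟩
        · -- trap for i
          intro v hv hown v' hv' he
          rcases Classical.em (v ∈ X) with hvX | hvX
          · exact Or.inl (hXB (hXtrap v hvX hown v' hv' he))
          · rcases hv with hvB | hvW
            · exact Or.inl (hBtrapI v hvB hvX hown v' hv' he)
            · have hvB : v' ∈ B ∨ v' ∈ U'' := by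
                rcases Classical.em (v' ∈ B) with h | h
                · exact Or.inl h
                · exact Or.inr ⟨hv', h⟩
              rcases hvB with h | h
              · exact Or.inl h
              · exact Or.inr ((hW''reg o).2.2.1 v hvW hown v' h he)
        · -- play property
          intro ρ hmem hedge hstrat
          have hmemU : ∀ m, ρ m ∈ U := by
            intro m
            rcases hmem m with h | h
            · exact hBU h
            · exact (hW''reg o).1.trans Set.diff_subset h
          -- X absorbing along the play
          have hXabs : ∀ m, ρ m ∈ X → ρ (m + 1) ∈ X := by
            intro m hm
            by_cases hown : own (ρ m) = o
            · have h1 := hstrat m hown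
              rw [h1, hsO]
              simp only [if_pos hm]
              exact ((hW'reg o).2.1 (ρ m) hm hown).2
            · exact hXtrap (ρ m) hm hown (ρ (m+1)) (hmemU (m+1)) (hedge m)
          have hBabs : ∀ m, ρ m ∈ B → ρ (m + 1) ∈ B := by
            intro m hm
            rcases Classical.em (ρ m ∈ X) with hmX | hmX
            · exact hXB (hXabs m hmX)
            · by_cases hown : own (ρ m) = o
              · have h1 := hstrat m hown
                rw [h1, hsO]
                simp only [if_neg hmX, if_pos hm]
                exact (attrStrat_spec E own o U X fb hm hmX hown).2.1
              · exact hBtrapI (ρ m) hm hmX hown (ρ (m+1)) (hmemU (m+1)) (hedge m)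
          by_cases hhit : ∃ m₀, ρ m₀ ∈ B
          · obtain ⟨m₀, hm₀⟩ := hhit
            have hBall : ∀ t, ρ (t + m₀) ∈ B := by
              intro t
              induction t with
              | zero => simpa using hm₀
              | succ t ih =>
                have := hBabs (t + m₀) ih
                simpa [show t + m₀ + 1 = t + 1 + m₀ by omega] using this
            have hreach := attr_reach E own o U X fb (fun t => ρ (t + m₀))
              (by simpa using hm₀)
              (fun t => hmemU (t + m₀))
              (fun t => by
                have := hedge (t + m₀)
                simpa [show t + m₀ + 1 = t + 1 + m₀ by omega] using this)
              (fun t htB htX hto => by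
                have h1 := hstrat (t + m₀) hto
                have h2 : ρ (t + m₀ + 1) = sB (ρ (t + m₀)) := by
                  rw [h1, hsO]
                  simp only [if_neg htX]
                  exact if_pos htB
                simpa [show t + m₀ + 1 = t + 1 + m₀ by omega] using h2)
            obtain ⟨t₁, ht₁⟩ := hreach
            set m₁ := t₁ + m₀ with hm₁
            have hXall : ∀ t, ρ (t + m₁) ∈ X := by
              intro t
              induction t with
              | zero => simpa using ht₁
              | succ t ih =>
                have := hXabs (t + m₁) ih
                simpa [show t + m₁ + 1 = t + 1 + m₁ by omega] using this
            have hplay := (hW'reg o).2.2.2 (fun t => ρ (t + m₁)) hXall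
              (fun t => by
                have := hedge (t + m₁)
                simpa [show t + m₁ + 1 = t + 1 + m₁ by omega] using this)
              (fun t hto => by
                have h1 := hstrat (t + m₁) hto
                have h2 : ρ (t + m₁ + 1) = s' o (ρ (t + m₁)) := by
                  rw [h1, hsO]
                  simp only [if_pos (hXall t)]
                simpa [show t + m₁ + 1 = t + 1 + m₁ by omega] using h2)
            rwa [minInfCol_tail col ρ m₁] at hplay
          · push_neg at hhit
            have hmem'' : ∀ m, ρ m ∈ W'' o := by
              intro m
              rcases hmem m with h | h
              · exact absurd h (hhit m)
              · exact h
            apply (hW''reg o).2.2.2 ρ hmem'' hedge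
            intro m hown
            have h1 := hstrat m hown
            have hX' : ρ m ∉ X := fun h => hhit m (hXB h)
            rw [h1, hsO]
            simp only [if_neg hX', if_neg (hhit m)]
      refine ⟨fun j => if j = i then W'' i else B ∪ W'' o,
        fun j => if j = i then s'' i else sO, ?_, ?_⟩
      · have hkey : W'' i ∪ (B ∪ W'' o) = U := by
          rw [ho, Set.union_comm B _, ← Set.union_assoc, union_other W'' i, hW''union]
          rw [hU'', Set.diff_union_of_subset hBU]
        by_cases h0 : i = 0
        · simp only [ho, h0] at hkey ⊢
          simp only [other] at hkey ⊢
          simpa using hkey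
        · have h1 : i = 1 := Fin.ext (by
            have h2 := i.isLt
            have h3 : (i : ℕ) ≠ 0 := fun hh => h0 (Fin.ext hh)
            omega)
          simp only [ho, h1] at hkey ⊢
          simp only [other] at hkey ⊢
          simpa [Set.union_comm] using hkey
      · intro j
        rcases eq_or_other i j with rfl | rfl
        · simpa using hregI
        · simp only [if_neg (other_ne i)]
          rw [← ho]
          exact hregO

end Zielonka

section Pumping
variable {V : Type*}

open List in
lemma sublist_pair_decomp {x : V} : ∀ {l : List V}, [x, x] <+ l →
    ∃ a b d : List V, l = a ++ x :: b ++ x :: d := by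
  intro l h
  induction l with
  | nil => cases h
  | cons y t ih =>
    cases h with
    | cons _ h' =>
      obtain ⟨a, b, d, rfl⟩ := ih h'
      exact ⟨y :: a, b, d, rfl⟩
    | cons_cons _ h' =>
      have hx : x ∈ t := List.singleton_sublist.mp h'
      obtain ⟨s, t', rfl⟩ := List.append_of_mem hx
      exact ⟨[], s, t', rfl⟩

lemma chain'_getD {R : V → V → Prop} {w : List V} (h : w.Chain' R) (dflt : V)
    {u : ℕ} (hu : u + 1 < w.length) :
    R (w.getD u dflt) (w.getD (u + 1) dflt) := by
  replace h := List.isChain_iff_getElem.mp h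
  have h1 := h u (by omega)
  have e1 : w.getD u dflt = w.get ⟨u, by omega⟩ := by
    rw [List.getD_eq_getElem?_getD, List.getElem?_eq_getElem (by omega)]
    rfl
  have e2 : w.getD (u + 1) dflt = w.get ⟨u + 1, by omega⟩ := by
    rw [List.getD_eq_getElem?_getD, List.getElem?_eq_getElem (by omega)]
    rfl
  rw [e1, e2]
  exact h1

/-- the pumping argument: a positional winning strategy for the parity game is
winning for the finite-time game with a large threshold. -/
lemma positional_FT [Fintype V] (G : GameGraph V) (col : V → ℕ) (n k : ℕ)
    (hk : 1 ≤ k)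
    (hthresh : ∀ c < n, (Finset.univ.filter fun v => col v = c).card < k)
    (j : Fin 2) (σ : List V → V → V) (hpos : Positional σ)
    (hwin : WinningStrategy G col j σ) : FTWins G col n k j := by
  classical
  refine ⟨σ, hwin.1, ?_⟩
  intro w hw hcons
  obtain ⟨c, hcn, hck⟩ := hw.2.1
  by_cases hpar : c % 2 = (j : ℕ)
  · exact ⟨c, hcn, hck, hpar⟩
  exfalso
  have hwne : w ≠ [] := by
    intro h
    have := hw.1.1
    rw [h] at this
    simp at this
  obtain ⟨hsc, hlast⟩ := Sc_eq_and_color col c hwne hk hck (hw.2.2 c hcn)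
  have hsc' : 1 ≤ scAux col c w.reverse := by
    unfold Sc at hsc
    omega
  obtain ⟨r₁, r₂, hrw, hallge, hcount⟩ := scAux_decomp col c w.reverse hsc'
  have hcount' : (r₁.filter (fun x => decide (col x = c))).length = k := by
    rw [← List.countP_eq_length_filter, hcount]
    exact hsc
  have hnodup : ¬ (r₁.filter (fun x => decide (col x = c))).Nodup := by
    intro hnd
    have h1 := List.toFinset_card_of_nodup hnd
    have h2 : (r₁.filter (fun x => decide (col x = c))).toFinset ⊆
        Finset.univ.filter (fun v => col v = c) := by
      intro x hx
      rw [List.mem_toFinset] at hx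
      have h3 := List.mem_filter.mp hx
      simp only [Finset.mem_filter]
      exact ⟨Finset.mem_univ x, by simpa using h3.2⟩
    have h3 := Finset.card_le_card h2
    rw [h1, hcount'] at h3
    exact absurd h3 (not_le.mpr (hthresh c hcn))
  obtain ⟨v, hdup⟩ := List.exists_duplicate_iff_not_nodup.mpr hnodup
  have hvc : col v = c := by simpa using (List.mem_filter.mp hdup.mem).2
  have hdup₁ : List.Sublist [v, v] r₁ :=
    (List.duplicate_iff_sublist.mp hdup).trans List.filter_sublist
  obtain ⟨a, b, d, hr₁⟩ := sublist_pair_decomp hdup₁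
  -- w = p ++ v :: (bb ++ v :: aa)
  have hwdecomp : w = (r₂.reverse ++ d.reverse) ++ v :: (b.reverse ++ v :: a.reverse) := by
    rw [← List.reverse_reverse w, hrw, hr₁]
    simp
  set p := r₂.reverse ++ d.reverse with hp
  set bb := b.reverse with hbb
  set aa := a.reverse with haa
  set q₁ := p.length with hq₁
  set dd := bb.length + 1 with hdd
  set q₂ := q₁ + dd with hq₂def
  have hlenw : w.length = q₁ + bb.length + 2 + aa.length := by
    rw [hwdecomp]
    simp [hq₁]
    omega
  have hq₂len : q₂ < w.length := by omega
  have hget : ∀ u, q₁ ≤ u → u ≤ q₂ →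
      w.getD u G.vin = (v :: (bb ++ [v])).getD (u - q₁) G.vin := by
    intro u h1 h2
    rw [hwdecomp, List.getD_append_right p _ G.vin u (by omega)]
    have he : v :: (bb ++ v :: aa) = (v :: (bb ++ [v])) ++ aa := by simp
    rw [he, List.getD_append _ _ _ _ (by
      simp only [List.length_cons, List.length_append, List.length_singleton]
      omega)]
  have hF2a : w.getD q₁ G.vin = v := by
    rw [hget q₁ le_rfl (by omega)]
    simp
  have hF2b : w.getD q₂ G.vin = v := by
    rw [hget q₂ (by omega) le_rfl]
    have h1 : q₂ - q₁ = bb.length + 1 := by omega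
    rw [h1]
    rw [List.getD_cons_succ, List.getD_append_right _ _ _ _ le_rfl]
    simp
  have hF3 : ∀ u, q₁ ≤ u → u ≤ q₂ → c ≤ col (w.getD u G.vin) := by
    intro u h1 h2
    rw [hget u h1 h2]
    have hu : u - q₁ < (v :: (bb ++ [v])).length := by
      simp only [List.length_cons, List.length_append, List.length_singleton]
      omega
    set xx := (v :: (bb ++ [v])).getD (u - q₁) G.vin with hxx
    have hmem : xx ∈ v :: (bb ++ [v]) := by
      rw [hxx, List.getD_eq_getElem?_getD, List.getElem?_eq_getElem hu]
      exact List.getElem_mem hu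
    rcases List.mem_cons.mp hmem with h | h
    · rw [h, hvc]
    · rcases List.mem_append.mp h with h | h
      · apply hallge
        rw [hr₁]
        have h4 : xx ∈ b := List.mem_reverse.mp h
        simp only [List.mem_append, List.mem_cons]
        tauto
      · simp only [List.mem_singleton] at h
        rw [h, hvc]
  -- the pumped play
  obtain ⟨f, hf⟩ : ∃ f : ℕ → ℕ, ∀ m, f m = if m < q₂ then m else q₁ + (m - q₁) % dd :=
    ⟨_, fun _ => rfl⟩
  obtain ⟨ρ, hρ⟩ : ∃ ρ : ℕ → V, ∀ m, ρ m = w.getD (f m) G.vin := ⟨_, fun _ => rfl⟩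
  have hddpos : 0 < dd := by omega
  have hflt : ∀ m, f m < q₂ := by
    intro m
    rw [hf]
    split_ifs with h
    · exact h
    · have := Nat.mod_lt (m - q₁) hddpos
      omega
  have hstep : ∀ m, f (m + 1) = f m + 1 ∨ (f (m + 1) = q₁ ∧ f m + 1 = q₂) := by
    intro m
    by_cases h1 : m + 1 < q₂
    · left
      rw [hf, hf]
      rw [if_pos h1, if_pos (by omega)]
    · by_cases h2 : m < q₂
      · right
        constructor
        · rw [hf, if_neg h1]
          have h3 : m + 1 - q₁ = dd := by omega
          rw [h3, Nat.mod_self]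
          omega
        · rw [hf, if_pos h2]
          omega
      · have hmod : (m + 1 - q₁) % dd = ((m - q₁) % dd + 1) % dd := by
          rw [show m + 1 - q₁ = (m - q₁) + 1 by omega]
          rw [Nat.mod_add_mod]
        have hr : (m - q₁) % dd < dd := Nat.mod_lt _ hddpos
        by_cases hrd : (m - q₁) % dd + 1 = dd
        · right
          constructor
          · rw [hf, if_neg h1, hmod, hrd, Nat.mod_self]
            omega
          · rw [hf, if_neg h2]
            omega
        · left
          rw [hf, hf, if_neg h1, if_neg h2, hmod]
          rw [Nat.mod_eq_of_lt (by omega)]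
          omega
  have hfm1 : ∀ m, ρ (m + 1) = w.getD (f m + 1) G.vin := by
    intro m
    rcases hstep m with h | ⟨h1, h2⟩
    · rw [hρ, h]
    · rw [hρ, h1, h2, hF2a, hF2b]
  have hisplay : IsPlay G ρ := by
    constructor
    · rw [hρ, hf]
      rw [if_pos (show (0:ℕ) < q₂ by omega)]
      have hh := hw.1.1
      cases w with
      | nil => exact absurd rfl hwne
      | cons x t =>
        simp only [List.head?_cons, Option.some.injEq] at hh
        simp [hh]
    · intro m
      rw [hρ, hfm1 m]
      exact chain'_getD hw.1.2 G.vin (by have := hflt m; omega)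
  have hconsist : ConsistentPlay G j σ ρ := by
    refine ⟨hisplay, ?_⟩
    intro m hown
    rw [hρ] at hown
    have h1 := hcons (f m) (by have := hflt m; omega) hown
    rw [hfm1 m, h1, hρ]
    exact hpos _ _ _
  have hWP := hwin.2 ρ hconsist
  unfold WinningPlay at hWP
  have hminc : minInfCol col ρ = c := by
    apply minInfCol_eq
    · intro M
      have hge1 : M + 1 ≤ dd * (M + 1) := Nat.le_mul_of_pos_left _ hddpos
      have hge2 : dd ≤ dd * (M + 1) := Nat.le_mul_of_pos_right _ (by omega)
      refine ⟨q₁ + dd * (M + 1), by omega, ?_⟩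
      rw [hρ, hf, if_neg (by omega)]
      rw [show q₁ + dd * (M + 1) - q₁ = dd * (M + 1) by omega]
      rw [Nat.mul_mod_right, Nat.add_zero, hF2a]
      exact hvc
    · refine ⟨q₂, fun m hm => ?_⟩
      rw [hρ]
      apply hF3
      · rw [hf]
        split_ifs with h
        · omega
        · omega
      · have := hflt m
        omega
  rw [hminc] at hWP
  exact hpar hWP

end Pumping

section Assembly
variable {V : Type*}

lemma regWin_winning [Fintype V] (G : GameGraph V) (col : V → ℕ) (j : Fin 2)
    (W : Set V) (s : V → V)
    (hreg : RegWin G.E G.own col Set.univ j s W) (hvin : G.vin ∈ W) :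
    ∃ σ, Positional σ ∧ WinningStrategy G col j σ := by
  classical
  refine ⟨fun (_ : List V) v => if G.own v = j ∧ v ∈ W then s v else (G.succ v).choose,
    fun h h' v => rfl, ?_, ?_⟩
  · intro h v
    dsimp only
    split_ifs with hcond
    · exact (hreg.2.1 v hcond.2 hcond.1).1
    · exact (G.succ v).choose_spec
  · intro ρ hcp
    have hmemW : ∀ m, ρ m ∈ W := by
      intro m
      induction m with
      | zero => rw [hcp.1.1]; exact hvin
      | succ m ih =>
        by_cases hown : G.own (ρ m) = j
        · have h1 := hcp.2 m hown
          dsimp only at h1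
          rw [if_pos ⟨hown, ih⟩] at h1
          rw [h1]
          exact (hreg.2.1 (ρ m) ih hown).2
        · exact hreg.2.2.1 (ρ m) ih hown (ρ (m + 1)) (Set.mem_univ _) (hcp.1.2 m)
    have hplay := hreg.2.2.2 ρ hmemW (fun m => hcp.1.2 m) ?_
    · exact hplay
    · intro m hown
      have h1 := hcp.2 m hown
      dsimp only at h1
      rw [if_pos ⟨hown, hmemW m⟩] at h1
      exact h1

end Assembly

/-- Theorem 3: on a finite game graph, for every threshold `k` exceeding
`max_{c ∈ [n]} |V|_c`, Player `i` wins the parity game `(G, col)` iff Player `i`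
wins the finite-time parity game `(G, col, k)`. -/
theorem stmt4 {V : Type*} [Fintype V] (n : ℕ) (G : GameGraph V) (col : V → ℕ)
    (hcol : ∀ v, col v < n) (k : ℕ) (hk : 1 ≤ k)
    (hthresh : ∀ c < n, (Finset.univ.filter fun v => col v = c).card < k)
    (i : Fin 2) :
    WinsGame G col i ↔ FTWins G col n k i := by
  classical
  obtain ⟨W, s, hunion, hreg⟩ := zielonka G.E G.own col (Fintype.card V) Set.univ
    (by rw [Set.ncard_univ, Nat.card_eq_fintype_card])
    (fun v _ => by
      obtain ⟨w, hw⟩ := G.succ v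
      exact ⟨w, Set.mem_univ w, hw⟩)
  have hvin : G.vin ∈ W 0 ∪ W 1 := by rw [hunion]; exact Set.mem_univ _
  obtain ⟨j, hj⟩ : ∃ j, G.vin ∈ W j := by
    rcases hvin with h | h
    · exact ⟨0, h⟩
    · exact ⟨1, h⟩
  obtain ⟨σj, hσpos, hσwin⟩ := regWin_winning G col j (W j) (s j) (hreg j) hj
  constructor
  · rintro ⟨σ, hσ⟩
    by_cases hji : j = i
    · subst hji
      exact positional_FT G col n k hk hthresh j σj hσpos hσwin
    · exfalso
      have hji' : j = other i := eq_other_of_ne hji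
      rw [hji'] at hσwin
      exact parity_unique G col i hσ hσwin
  · intro hFT
    by_cases hji : j = i
    · subst hji
      exact ⟨σj, hσwin⟩
    · exfalso
      have hji' : j = other i := eq_other_of_ne hji
      rw [hji'] at hσwin
      exact FT_unique G col n k hcol hk i hFT
        (positional_FT G col n k hk hthresh (other i) σj hσpos hσwin)

end FDGames
end

section
/- Let w be a finite path in a pushdown game graph with 0 ∈ StairPositions(w), and let m ∈ ℕ. If |w| ≥ 2^m, then w has a prefix w' with |StairPositions(w')| > m. -/
namespace FDGames


/-- A pushdown system.  The bottom-of-stack symbol `⊥` is kept implicit: a stack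
content is the list of symbols from `Γ` strictly above `⊥` (top = head), and the
top-of-stack symbol read by a transition is an `Option Γ` (`none` = `⊥`).  Since
`⊥` can neither be written nor deleted, a transition reading a symbol of `Γ`
rewrites it to at most two symbols of `Γ`, and a transition reading `⊥` writes at
most one symbol of `Γ` above `⊥`.  The system is deadlock-free. -/
structure PDS (Q Γ : Type*) where
  qin : Q
  Δ : Set (Q × Option Γ × Q × List Γ)
  bound2 : ∀ q A p α, (q, A, p, α) ∈ Δ → α.length ≤ 2
  bound1 : ∀ q p α, (q, (none : Option Γ), p, α) ∈ Δ → α.length ≤ 1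
  df : ∀ q A, ∃ q' α, (q, A, q', α) ∈ Δ

/-- Configurations: a state together with the stack content above `⊥`. -/
abbrev Config (Q Γ : Type*) := Q × List Γ

/-- The stack height of a configuration. -/
def confSh {Q Γ : Type*} (v : Config Q Γ) : ℕ := v.2.length

/-- One step of the pushdown system between configurations. -/
def PDS.step {Q Γ : Type*} (P : PDS Q Γ) (u v : Config Q Γ) : Prop :=
  (u.2 = [] ∧ (u.1, (none : Option Γ), v.1, v.2) ∈ P.Δ) ∨
  (∃ a rest α, u.2 = a :: rest ∧ (u.1, some a, v.1, α) ∈ P.Δ ∧ v.2 = α ++ rest)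

/-- The pushdown game graph induced by a PDS and a partition of its states. -/
def PDS.graph {Q Γ : Type*} (P : PDS Q Γ) (own : Q → Fin 2) :
    GameGraph (Config Q Γ) where
  own := fun v => own v.1
  E := P.step
  vin := (P.qin, [])
  succ := by
    rintro ⟨q, _ | ⟨a, rest⟩⟩
    · obtain ⟨q', α, h⟩ := P.df q none
      exact ⟨(q', α), Or.inl ⟨rfl, h⟩⟩
    · obtain ⟨q', α, h⟩ := P.df q (some a)
      exact ⟨(q', α ++ rest), Or.inr ⟨a, rest, α, rfl, h, rfl⟩⟩

/-- The stair positions of a sequence of stack heights. -/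
def stairPositions (hs : List ℕ) : Finset ℕ :=
  (Finset.range hs.length).filter fun m =>
    ∀ m' < hs.length, m ≤ m' → hs.getD m 0 ≤ hs.getD m' 0

/-- For a word of (color, stack height) pairs, the position where `lastBump`
starts, i.e. `l + 1` for the second largest stair position `l` (and `0` if there
is no such position). -/
def bumpStart (w : List (ℕ × ℕ)) : ℕ :=
  ((Finset.range (w.length - 1)).filter
    fun l => (w.getD l (0, 0)).2 ≤ ((w.getLast?).getD (0, 0)).2).sup (· + 1)

theorem bumpStart_lt {w : List (ℕ × ℕ)} (h : w ≠ []) : bumpStart w < w.length := by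
  have h1 : 0 < w.length := List.length_pos_iff.mpr h
  have h2 : bumpStart w ≤ w.length - 1 := by
    apply Finset.sup_le
    intro l hl
    have := Finset.mem_range.mp (Finset.mem_filter.mp hl).1
    omega
  omega

/-- The minimal color occurring in a word of (color, stack height) pairs. -/
def minColList (w : List (ℕ × ℕ)) : ℕ := WithTop.untopD 0 ((w.map Prod.fst).minimum)

/-- The stair-scoring function `StairSc_c`, on words of (color, stack height)
pairs.  `w.take (bumpStart w)` is `Reset(w)` and `w.drop (bumpStart w)` is
`lastBump(w)`. -/
def StairSc (c : ℕ) (w : List (ℕ × ℕ)) : ℕ :=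
  if h : w = [] then 0
  else if c < minColList (w.drop (bumpStart w)) then StairSc c (w.take (bumpStart w))
  else if minColList (w.drop (bumpStart w)) = c then StairSc c (w.take (bumpStart w)) + 1
  else 0
termination_by w.length
decreasing_by
  all_goals
    have hlt := bumpStart_lt h
    simp only [List.length_take]
    omega

/-- Maximum of `StairSc_c` over all prefixes. -/
def MaxStairSc (c : ℕ) (w : List (ℕ × ℕ)) : ℕ :=
  (Finset.range (w.length + 1)).sup fun m => StairSc c (w.take m)

/-- The word of (color, stack height) pairs associated to a path of
configurations. -/
def toCH {Q Γ : Type*} (col : Q → ℕ) (w : List (Config Q Γ)) : List (ℕ × ℕ) :=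
  w.map fun v => (col v.1, v.2.length)

lemma getD_take (l : List ℕ) {j p : ℕ} (h : p < j) : (l.take j).getD p 0 = l.getD p 0 := by
  simp [List.getD_eq_getElem?_getD, List.getElem?_take, h]

lemma getD_drop (l : List ℕ) (a p : ℕ) : (l.drop a).getD p 0 = l.getD (a+p) 0 := by
  simp [List.getD_eq_getElem?_getD, List.getElem?_drop]

lemma mem_stairs {hs : List ℕ} {p : ℕ} : p ∈ stairPositions hs ↔
    p < hs.length ∧ ∀ m' < hs.length, p ≤ m' → hs.getD p 0 ≤ hs.getD m' 0 := by
  simp [stairPositions]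

lemma stairs_shift {hs : List ℕ} {a j : ℕ} (h : a + j ≤ hs.length) (p : ℕ)
    (hp : p ∈ stairPositions ((hs.drop a).take j)) :
    a + p ∈ stairPositions (hs.take (a + j)) := by
  rw [mem_stairs] at hp ⊢
  have hlen1 : ((hs.drop a).take j).length = j := by
    rw [List.length_take, List.length_drop]; omega
  have hlen2 : (hs.take (a+j)).length = a + j := by
    rw [List.length_take]; omega
  rw [hlen1] at hp
  rw [hlen2]
  obtain ⟨hpj, hmin⟩ := hp
  refine ⟨by omega, ?_⟩
  intro q hq hpq
  have hq' : q - a < j := by omega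
  have := hmin (q - a) hq' (by omega)
  rw [getD_take _ hpj, getD_drop, getD_take _ hq', getD_drop] at this
  rw [getD_take _ (show a + p < a + j by omega), getD_take _ hq]
  have : hs.getD (a+p) 0 ≤ hs.getD (a + (q-a)) 0 := this
  rwa [show a + (q-a) = q by omega] at this

lemma zero_mem_stairs {hs : List ℕ} {j : ℕ} (hj : 1 ≤ j) (hjn : j ≤ hs.length)
    (hmin : ∀ p < hs.length, hs.getD 0 0 ≤ hs.getD p 0) :
    0 ∈ stairPositions (hs.take j) := by
  rw [mem_stairs]
  have hlen : (hs.take j).length = j := by rw [List.length_take]; omega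
  rw [hlen]
  refine ⟨hj, ?_⟩
  intro q hq _
  rw [getD_take _ (show 0 < j by omega), getD_take _ hq]
  exact hmin q (by omega)

lemma lift_stairs {hs : List ℕ} (hmin : ∀ p < hs.length, hs.getD 0 0 ≤ hs.getD p 0)
    {a j m : ℕ} (ha : 1 ≤ a) (hle : a + j ≤ hs.length)
    (h : m < (stairPositions ((hs.drop a).take j)).card) :
    m + 1 < (stairPositions (hs.take (a + j))).card := by
  have hj : 1 ≤ j := by
    by_contra hj
    have : j = 0 := by omega
    subst this
    simp [stairPositions] at h
  have hsub : insert 0 ((stairPositions ((hs.drop a).take j)).image (a + ·)) ⊆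
      stairPositions (hs.take (a + j)) := by
    intro x hx
    rcases Finset.mem_insert.mp hx with rfl | hx
    · exact zero_mem_stairs (by omega) hle hmin
    · obtain ⟨p, hp, rfl⟩ := Finset.mem_image.mp hx
      exact stairs_shift hle p hp
  have hcard1 : ((stairPositions ((hs.drop a).take j)).image (a + ·)).card
      = (stairPositions ((hs.drop a).take j)).card :=
    Finset.card_image_of_injective _ (fun x y hxy => by omega)
  have h0notin : 0 ∉ (stairPositions ((hs.drop a).take j)).image (a + ·) := by
    intro hx
    obtain ⟨p, _, hp⟩ := Finset.mem_image.mp hx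
    omega
  calc m + 1 < (stairPositions ((hs.drop a).take j)).card + 1 := by omega
    _ = (insert 0 ((stairPositions ((hs.drop a).take j)).image (a + ·))).card := by
        rw [Finset.card_insert_of_notMem h0notin, hcard1]
    _ ≤ _ := Finset.card_le_card hsub

lemma key_s7 : ∀ (m : ℕ) (hs : List ℕ),
    (∀ i, i + 1 < hs.length → hs.getD (i+1) 0 ≤ hs.getD i 0 + 1) →
    (∀ p < hs.length, hs.getD 0 0 ≤ hs.getD p 0) →
    2 ^ m ≤ hs.length →
    ∃ j ≤ hs.length, m < (stairPositions (hs.take j)).card := by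
  intro m
  induction m with
  | zero =>
    intro hs _ hmin hlen
    refine ⟨1, by simpa using hlen, ?_⟩
    have h1 : 0 ∈ stairPositions (hs.take 1) :=
      zero_mem_stairs le_rfl (by simpa using hlen) hmin
    exact Finset.card_pos.mpr ⟨0, h1⟩
  | succ m ih =>
    intro hs hstep hmin hlen
    set n := hs.length with hn
    have hn2 : 2 ≤ n := le_trans (by have := Nat.one_le_two_pow (n := m); omega) hlen
    have hpow : 1 ≤ 2 ^ m := Nat.one_le_two_pow
    by_cases hA : ∀ p, 1 ≤ p → p < 2 ^ m + 1 → p < n → hs.getD p 0 ≠ (hs.getD 0 0)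
    · -- Case A: no return to (hs.getD 0 0) among positions 1..2^m; use segment hs[1, min(2^m+1, n))
      set t := min (2 ^ m + 1) n with ht
      have ht1 : 2 ^ m + 1 ≤ t := by
        have : 2 ^ m + 1 ≤ n := by
          have : 2 ^ (m+1) = 2 ^ m + 2 ^ m := by ring
          have h2 : 1 ≤ 2 ^ m := Nat.one_le_two_pow
          omega
        omega
      have htn : t ≤ n := min_le_right _ _
      -- heights strictly above (hs.getD 0 0) on [1, t)
      have habove : ∀ p, 1 ≤ p → p < t → (hs.getD 0 0) + 1 ≤ hs.getD p 0 := by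
        intro p hp1 hpt
        have hpn : p < n := lt_of_lt_of_le hpt htn
        have := hA p hp1 (lt_of_lt_of_le hpt (min_le_left _ _)) hpn
        have := hmin p hpn
        omega
      set s := (hs.drop 1).take (t - 1) with hsdef
      have hslen : s.length = t - 1 := by
        rw [hsdef, List.length_take, List.length_drop]; omega
      have hsget : ∀ p, p < t - 1 → s.getD p 0 = hs.getD (1 + p) 0 := by
        intro p hp
        rw [hsdef, getD_take _ hp, getD_drop]
      have hs1 : hs.getD 1 0 = (hs.getD 0 0) + 1 := by
        have h1 := hstep 0 (by omega)
        rw [show (0:ℕ)+1 = 1 from rfl] at h1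
        have h2 := habove 1 le_rfl (by omega)
        omega
      obtain ⟨j', hj'le, hj'⟩ := ih s
        (by
          intro i hi
          rw [hslen] at hi
          rw [hsget _ (by omega), hsget _ (by omega),
            show 1 + (i+1) = (1+i) + 1 by omega]
          exact hstep (1+i) (by omega))
        (by
          intro p hp
          rw [hslen] at hp
          rw [hsget _ (by omega), hsget _ hp, hs1]
          exact habove (1+p) (by omega) (by omega))
        (by rw [hslen]; omega)
      rw [hslen] at hj'le
      refine ⟨1 + j', by omega, ?_⟩
      apply lift_stairs hmin le_rfl (by omega)
      rwa [show (hs.drop 1).take j' = s.take j' by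
        rw [hsdef, List.take_take, min_eq_left hj'le]]
    · -- Case B: some return position t with 1 ≤ t ≤ 2^m, hs t = (hs.getD 0 0)
      push_neg at hA
      obtain ⟨t, ht1, ht2, htn, hth0⟩ := hA
      set s := hs.drop t with hsdef
      have hslen : s.length = n - t := by rw [hsdef, List.length_drop]
      have hsget : ∀ p, s.getD p 0 = hs.getD (t + p) 0 := fun p => getD_drop _ _ _
      obtain ⟨j', hj'le, hj'⟩ := ih s
        (by
          intro i hi
          rw [hslen] at hi
          rw [hsget, hsget, show t + (i+1) = (t+i) + 1 by omega]
          exact hstep (t+i) (by omega))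
        (by
          intro p hp
          rw [hslen] at hp
          rw [hsget, hsget, Nat.add_zero, hth0]
          exact hmin (t+p) (by omega))
        (by
          rw [hslen]
          have : 2 ^ (m+1) = 2 ^ m + 2 ^ m := by ring
          omega)
      rw [hslen] at hj'le
      refine ⟨t + j', by omega, ?_⟩
      exact lift_stairs hmin ht1 (by omega) hj'

lemma step_height {Q Γ : Type*} {P : PDS Q Γ} {u v : Config Q Γ}
    (h : P.step u v) : v.2.length ≤ u.2.length + 1 := by
  rcases h with ⟨h1, h2⟩ | ⟨a, rest, α, hu, hΔ, hv⟩
  · have := P.bound1 _ _ _ h2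
    omega
  · have := P.bound2 _ _ _ _ hΔ
    rw [hv, hu]
    simp only [List.length_append, List.length_cons]
    omega


/-- Every finite path `w` in a pushdown game graph with `0 ∈ StairPositions(w)`
and `|w| ≥ 2 ^ m` has a prefix with more than `m` stair positions. -/
theorem stmt7 {Q Γ : Type*} [Finite Q] [Finite Γ] (P : PDS Q Γ)
    (w : List (Config Q Γ)) (hchain : w.Chain' P.step)
    (h0 : 0 ∈ stairPositions (w.map confSh)) (m : ℕ) (hlen : 2 ^ m ≤ w.length) :
    ∃ j ≤ w.length, m < (stairPositions ((w.take j).map confSh)).card := by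
  set hs := w.map confSh with hhs
  have hlen' : hs.length = w.length := by rw [hhs, List.length_map]
  have hget : ∀ i, (hi : i < w.length) → hs.getD i 0 = confSh w[i] := by
    intro i hi
    rw [hhs, List.getD_eq_getElem?_getD, List.getElem?_map, List.getElem?_eq_getElem hi]
    rfl
  have hstep : ∀ i, i + 1 < hs.length → hs.getD (i+1) 0 ≤ hs.getD i 0 + 1 := by
    intro i hi
    rw [hlen'] at hi
    rw [hget _ hi, hget _ (by omega)]
    have := List.isChain_iff_getElem.mp hchain i (by omega)
    have := step_height this
    simp only [confSh]
    simpa [List.get_eq_getElem] using this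
  have hmin : ∀ p < hs.length, hs.getD 0 0 ≤ hs.getD p 0 := by
    rw [mem_stairs] at h0
    exact fun p hp => h0.2 p hp (Nat.zero_le p)
  obtain ⟨j, hj, hcard⟩ := key_s7 m hs hstep hmin (by omega)
  refine ⟨j, by omega, ?_⟩
  rwa [List.map_take, ← hhs]

end FDGames
end

section
/- Let (G, col) be a pushdown parity game with coloring col : Q → [n], and let w be a finite path in G with 0 ∈ StairPositions(w). Then there exists a word u over [n] with |u| = |Stairs(w)| such that StairSc_c(w) = Sc_c(u) for every c ∈ [n], where Sc is computed over the alphabet [n] with the identity coloring. -/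
namespace FDGames


lemma mem_stairPositions {hs : List ℕ} {m : ℕ} :
    m ∈ stairPositions hs ↔ m < hs.length ∧
      ∀ m' < hs.length, m ≤ m' → hs.getD m 0 ≤ hs.getD m' 0 := by
  simp [stairPositions]

lemma getD_snd_eq (W : List (ℕ × ℕ)) (l : ℕ) :
    (W.getD l (0, 0)).2 = (W.map Prod.snd).getD l 0 := by
  simp only [List.getD_eq_getElem?_getD, List.getElem?_map]
  cases W[l]? <;> simp

lemma minColList_mem {L : List (ℕ × ℕ)} (h : L ≠ []) :
    minColList L ∈ L.map Prod.fst := by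
  rcases h' : (L.map Prod.fst).minimum with _ | a
  · exact absurd (List.minimum_eq_top.mp h') (by simpa using h)
  · have := List.minimum_mem h'
    have e : minColList L = a := by simp only [minColList, h']; rfl
    rw [e]; exact this

lemma getD_take_eq (hs : List ℕ) {m b : ℕ} (hm : m < b) :
    (hs.take b).getD m 0 = hs.getD m 0 := by
  simp only [List.getD_eq_getElem?_getD, List.getElem?_take, hm, if_true]

lemma key_s8 (n : ℕ) : ∀ N (W : List (ℕ × ℕ)), W.length ≤ N →
    (∀ p ∈ W, p.1 < n) →
    0 ∈ stairPositions (W.map Prod.snd) →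
    ∃ u : List ℕ, (∀ x ∈ u, x < n) ∧
      u.length = (stairPositions (W.map Prod.snd)).card ∧
      ∀ c, StairSc c W = Sc id c u := by
  intro N
  induction N with
  | zero =>
    intro W hlen _ h0
    have : W = [] := List.length_eq_zero_iff.mp (Nat.le_zero.mp hlen)
    subst this
    simp [mem_stairPositions] at h0
  | succ N ih =>
    intro W hlen hW h0
    by_cases hne : W = []
    · subst hne; simp [mem_stairPositions] at h0
    set hs := W.map Prod.snd with hhs
    have hlen' : hs.length = W.length := List.length_map _
    have h0' := mem_stairPositions.mp h0
    have hlt : bumpStart W < W.length := bumpStart_lt hne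
    set b := bumpStart W with hbdef
    have hlast : ((W.getLast?).getD (0, 0)).2 = hs.getD (W.length - 1) 0 := by
      rw [List.getLast?_eq_getElem?, ← List.getD_eq_getElem?_getD, getD_snd_eq]
    have factA : ∀ l, l < W.length - 1 → hs.getD l 0 ≤ hs.getD (W.length - 1) 0 →
        l + 1 ≤ b := by
      intro l h1 h2
      refine Finset.le_sup (f := (· + 1)) ?_
      rw [Finset.mem_filter]
      exact ⟨Finset.mem_range.mpr h1, by rw [getD_snd_eq, hlast, ← hhs]; exact h2⟩
    have factB : ∀ m, b ≤ m → m < W.length - 1 →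
        hs.getD (W.length - 1) 0 < hs.getD m 0 := by
      intro m h1 h2
      by_contra hc
      push_neg at hc
      have := factA m h2 hc
      omega
    by_cases hb : b = 0
    · -- W must be a singleton
      have hlen1 : W.length = 1 := by
        by_contra hc
        have h2 : 2 ≤ W.length := by
          have := List.length_pos_iff.mpr hne; omega
        have := factA 0 (by omega) (h0'.2 (W.length - 1) (by omega) (by omega))
        omega
      obtain ⟨p, rfl⟩ := List.length_eq_one_iff.mp hlen1
      refine ⟨[p.1], by simpa using hW p (by simp), ?_, ?_⟩
      · have : stairPositions hs = {0} := by
          ext m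
          simp only [mem_stairPositions, Finset.mem_singleton]
          constructor
          · rintro ⟨h1, -⟩
            simp [hhs] at h1
            omega
          · rintro rfl
            refine ⟨by simp [hhs], fun m' hm' _ => ?_⟩
            have hm'0 : m' = 0 := by simp [hhs] at hm'; omega
            subst hm'0
            exact le_refl _
        simp [this]
      · intro c
        have hb0 : bumpStart [p] = 0 := by simp [bumpStart]
        have hmc : minColList [p] = p.1 := by simp [minColList]; exact WithTop.untopD_coe 0 p.1
        rw [StairSc]
        simp only [hb0, List.drop_zero, List.take_zero, hmc, if_neg, reduceDIte,
          List.cons_ne_self]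
        rw [StairSc]
        simp only [Sc, scAux, List.reverse_cons, List.reverse_nil, List.nil_append, id]
        split_ifs <;> rfl
    · -- inductive case
      have hb1 : 1 ≤ b := by omega
      -- fact C : the sup is attained
      have hCex : b - 1 < W.length - 1 ∧ hs.getD (b - 1) 0 ≤ hs.getD (W.length - 1) 0 := by
        have hSne : (((Finset.range (W.length - 1)).filter
            fun l => (W.getD l (0, 0)).2 ≤ ((W.getLast?).getD (0, 0)).2)).Nonempty := by
          by_contra hc
          rw [Finset.not_nonempty_iff_eq_empty] at hc
          rw [hbdef, bumpStart, hc] at hb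
          simp at hb
        obtain ⟨l, hl, hleq⟩ := Finset.exists_mem_eq_sup _ hSne (· + 1)
        have hbl : b = l + 1 := by rw [hbdef, bumpStart]; exact hleq
        have hl' := Finset.mem_filter.mp hl
        have hlr := Finset.mem_range.mp hl'.1
        have h2 := hl'.2
        rw [getD_snd_eq, hlast, ← hhs] at h2
        rw [show b - 1 = l by omega]
        exact ⟨by omega, h2⟩
      -- the take
      have hW'len : (W.take b).length = b := by
        rw [List.length_take]; omega
      have hmaptake : (W.take b).map Prod.snd = hs.take b := by
        rw [hhs, List.map_take]
      have h0'' : 0 ∈ stairPositions ((W.take b).map Prod.snd) := by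
        rw [hmaptake, mem_stairPositions]
        constructor
        · rw [List.length_take]; omega
        · intro m' hm' _
          rw [List.length_take] at hm'
          rw [getD_take_eq hs (by omega), getD_take_eq hs (by omega)]
          exact h0'.2 m' (by omega) (by omega)
      obtain ⟨u', hu1, hu2, hu3⟩ := ih (W.take b) (by rw [hW'len]; omega)
        (fun p hp => hW p (List.mem_of_mem_take hp)) h0''
      set x := minColList (W.drop b) with hxdef
      have hx : x < n := by
        have hdne : W.drop b ≠ [] := by
          intro hc
          have := congrArg List.length hc
          rw [List.length_drop] at this
          simp at this
          omega
        have := minColList_mem hdne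
        rw [← hxdef] at this
        obtain ⟨p, hp, hpx⟩ := List.mem_map.mp this
        exact hpx ▸ hW p (List.mem_of_mem_drop hp)
      -- set equality
      have hset : stairPositions hs = insert (W.length - 1) (stairPositions (hs.take b)) := by
        ext m
        simp only [Finset.mem_insert, mem_stairPositions, List.length_take, hlen']
        constructor
        · rintro ⟨hm, hall⟩
          by_cases hmb : m < b
          · refine Or.inr ⟨by omega, fun m' hm' hmm' => ?_⟩
            have hm'b : m' < b := by omega
            rw [getD_take_eq hs hmb, getD_take_eq hs hm'b]
            exact hall m' (by omega) hmm'
          · left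
            by_contra hc
            have hm1 : m < W.length - 1 := by omega
            have := factB m (by omega) hm1
            have := hall (W.length - 1) (by omega) (by omega)
            omega
        · rintro (rfl | ⟨hm, hall⟩)
          · exact ⟨by omega, fun m' hm' hmm' => by
              have : m' = W.length - 1 := by omega
              rw [this]⟩
          · have hmb : m < b := by omega
            have hall' : ∀ m' < b, m ≤ m' → hs.getD m 0 ≤ hs.getD m' 0 := by
              intro m' hm' hmm'
              have := hall m' (by omega) hmm'
              rwa [getD_take_eq hs hmb, getD_take_eq hs hm'] at this
            have hmlast : hs.getD m 0 ≤ hs.getD (W.length - 1) 0 :=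
              le_trans (hall' (b - 1) (by omega) (by omega)) hCex.2
            refine ⟨by omega, fun m' hm' hmm' => ?_⟩
            by_cases hm'b : m' < b
            · exact hall' m' hm'b hmm'
            · by_cases hm'l : m' < W.length - 1
              · exact le_trans hmlast (le_of_lt (factB m' (by omega) hm'l))
              · have : m' = W.length - 1 := by omega
                rw [this]; exact hmlast
      have hnotmem : W.length - 1 ∉ stairPositions (hs.take b) := by
        intro hc
        have := (mem_stairPositions.mp hc).1
        rw [List.length_take] at this
        omega
      refine ⟨u' ++ [x], ?_, ?_, ?_⟩
      · intro y hy
        rcases List.mem_append.mp hy with h | h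
        · exact hu1 y h
        · simp at h; omega
      · rw [List.length_append, hu2, hmaptake, hset,
          Finset.card_insert_of_notMem hnotmem]
        simp
      · intro c
        rw [StairSc, ← hbdef, ← hxdef]
        simp only [hne, reduceDIte]
        have hsc : Sc id c (u' ++ [x]) =
            if c < x then Sc id c u' else if x = c then Sc id c u' + 1 else 0 := by
          simp [Sc, scAux, List.reverse_append]
        rw [hsc, ← hu3 c]


/-- For every finite path `w` in a pushdown parity game with
`0 ∈ StairPositions(w)` there is a word `u` over `[n]` of length
`|Stairs(w)|` such that `StairSc_c(w) = Sc_c(u)` for every `c ∈ [n]`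
(scores of `u` computed with the identity coloring). -/
theorem stmt8 {Q Γ : Type*} [Finite Q] [Finite Γ] (P : PDS Q Γ) (n : ℕ)
    (col : Q → ℕ) (hcol : ∀ q, col q < n)
    (w : List (Config Q Γ)) (hchain : w.Chain' P.step)
    (h0 : 0 ∈ stairPositions (w.map confSh)) :
    ∃ u : List ℕ, (∀ x ∈ u, x < n) ∧
      u.length = (stairPositions (w.map confSh)).card ∧
      ∀ c < n, StairSc c (toCH col w) = Sc id c u := by
  have hmap : (toCH col w).map Prod.snd = w.map confSh := by
    simp [toCH, confSh, List.map_map]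
  obtain ⟨u, h1, h2, h3⟩ := key_s8 n (toCH col w).length (toCH col w) le_rfl
    (by
      intro p hp
      rw [toCH] at hp
      obtain ⟨v, hv, rfl⟩ := List.mem_map.mp hp
      exact hcol _)
    (by rw [hmap]; exact h0)
  exact ⟨u, h1, by rw [← hmap]; exact h2, fun c _ => h3 c⟩

end FDGames
end

section
/- Let (G, col) be a pushdown parity game with coloring col : Q → [n] and let k ≥ 1. Every finite path w in G starting at a configuration of stack height 0 with |w| ≥ 2^(k^n) satisfies MaxStairSc_c(w) ≥ k for some c ∈ [n]. -/
namespace FDGames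


/-! ### Auxiliary development for `stmt9` -/

/-- `StairSc` with a base value for the empty word. -/
def StairScB (b : ℕ → ℕ) (c : ℕ) (w : List (ℕ × ℕ)) : ℕ :=
  if h : w = [] then b c
  else if c < minColList (w.drop (bumpStart w)) then StairScB b c (w.take (bumpStart w))
  else if minColList (w.drop (bumpStart w)) = c then StairScB b c (w.take (bumpStart w)) + 1
  else 0
termination_by w.length
decreasing_by
  all_goals
    have hlt := bumpStart_lt h
    simp only [List.length_take]
    omega

@[simp] theorem StairScB_nil (b : ℕ → ℕ) (c : ℕ) : StairScB b c [] = b c := by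
  rw [StairScB]; simp

/-- Update of a base tuple by a color. -/
def updB (b : ℕ → ℕ) (d : ℕ) : ℕ → ℕ := fun c =>
  if c < d then b c else if d = c then b c + 1 else 0

theorem StairScB_eq_updB (b : ℕ → ℕ) (c : ℕ) {w : List (ℕ × ℕ)} (hw : w ≠ []) :
    StairScB b c w =
      updB (fun c' => StairScB b c' (w.take (bumpStart w)))
        (minColList (w.drop (bumpStart w))) c := by
  rw [StairScB, dif_neg hw]; rfl

theorem StairSc_eq_StairScB (c : ℕ) (w : List (ℕ × ℕ)) :
    StairSc c w = StairScB (fun _ => 0) c w := by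
  by_cases hw : w = []
  · subst hw; rw [StairSc, StairScB]; simp
  · rw [StairSc, StairScB, dif_neg hw, dif_neg hw,
        StairSc_eq_StairScB c (w.take (bumpStart w))]
termination_by w.length
decreasing_by
  all_goals
    have hlt := bumpStart_lt hw
    simp only [List.length_take]
    omega

theorem getD_take_s9 {w : List (ℕ × ℕ)} {t m : ℕ} (h1 : m < t) (h2 : m < w.length) :
    (w.take t).getD m (0, 0) = w.getD m (0, 0) := by
  rw [List.getD_eq_getElem _ _ (by simp [List.length_take]; omega),
      List.getD_eq_getElem _ _ h2, List.getElem_take]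

theorem getD_drop_take {w : List (ℕ × ℕ)} {s t m : ℕ} (h1 : m < t) (h2 : s + m < w.length) :
    ((w.drop s).take t).getD m (0, 0) = w.getD (s + m) (0, 0) := by
  have hh : m < ((w.drop s).take t).length := by
    simp [List.length_take, List.length_drop]; omega
  rw [List.getD_eq_getElem _ _ hh, List.getD_eq_getElem _ _ h2]
  rw [List.getElem_take, List.getElem_drop]

theorem getLast?_getD {w : List (ℕ × ℕ)} (hw : w ≠ []) :
    (w.getLast?).getD (0, 0) = w.getD (w.length - 1) (0, 0) := by
  have hL : 0 < w.length := List.length_pos_iff.mpr hw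
  rw [List.getLast?_eq_getLast hw, Option.getD_some, List.getLast_eq_getElem,
      List.getD_eq_getElem _ _ (by omega)]

theorem le_bumpStart {w : List (ℕ × ℕ)} {l : ℕ} (hl : l < w.length - 1)
    (hq : (w.getD l (0, 0)).2 ≤ ((w.getLast?).getD (0, 0)).2) : l + 1 ≤ bumpStart w := by
  unfold bumpStart
  exact Finset.le_sup (f := (· + 1))
    (Finset.mem_filter.mpr ⟨Finset.mem_range.mpr hl, hq⟩)

theorem bumpStart_le {w : List (ℕ × ℕ)} {K : ℕ}
    (h : ∀ l, l < w.length - 1 →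
      (w.getD l (0, 0)).2 ≤ ((w.getLast?).getD (0, 0)).2 → l + 1 ≤ K) :
    bumpStart w ≤ K := by
  unfold bumpStart
  apply Finset.sup_le
  intro l hl
  rw [Finset.mem_filter, Finset.mem_range] at hl
  exact h l hl.1 hl.2

theorem bumpStart_append {x u : List (ℕ × ℕ)} (hx : x ≠ []) (hu : u ≠ [])
    (hle : ∀ p ∈ u, (x.getLast hx).2 ≤ p.2) :
    bumpStart (x ++ u) = x.length + bumpStart u := by
  have hxl : 0 < x.length := List.length_pos_iff.mpr hx
  have hul : 0 < u.length := List.length_pos_iff.mpr hu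
  have hxu : x ++ u ≠ [] := by simp [hx]
  have hlen : (x ++ u).length = x.length + u.length := List.length_append
  have hlast : ((x ++ u).getLast?).getD (0, 0) = (u.getLast?).getD (0, 0) := by
    rw [List.getLast?_append_of_ne_nil x hu]
  have hgetr : ∀ m, x.length ≤ m → m < x.length + u.length →
      (x ++ u).getD m (0, 0) = u.getD (m - x.length) (0, 0) := by
    intro m h1 h2
    rw [List.getD_eq_getElem _ _ (by omega), List.getD_eq_getElem _ _ (by omega),
        List.getElem_append_right h1]
  have hxlast : (x ++ u).getD (x.length - 1) (0, 0) = x.getLast hx := by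
    rw [List.getD_eq_getElem _ _ (by omega), List.getElem_append_left (by omega),
        List.getLast_eq_getElem]
  apply le_antisymm
  · apply bumpStart_le
    intro l hl hq
    rw [hlen] at hl
    by_cases hlx : l < x.length
    · omega
    · push_neg at hlx
      have hq' : (u.getD (l - x.length) (0, 0)).2 ≤ ((u.getLast?).getD (0, 0)).2 := by
        rw [← hgetr l hlx (by omega), ← hlast]; exact hq
      have := le_bumpStart (w := u) (l := l - x.length) (by omega) hq'
      omega
  · have h1 : x.length ≤ bumpStart (x ++ u) := by
      have := le_bumpStart (w := x ++ u) (l := x.length - 1)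
        (by rw [hlen]; omega)
        (by
          rw [hxlast, hlast, getLast?_getD hu]
          have hm : u.getD (u.length - 1) (0, 0) ∈ u := by
            rw [List.getD_eq_getElem _ _ (by omega)]
            exact List.getElem_mem _
          exact hle _ hm)
      omega
    have h2 : bumpStart u ≤ bumpStart (x ++ u) - x.length := by
      apply bumpStart_le
      intro l hl hq
      have := le_bumpStart (w := x ++ u) (l := x.length + l)
        (by rw [hlen]; omega)
        (by
          rw [hgetr (x.length + l) (by omega) (by omega), hlast]
          simpa using hq)
      omega
    omega

theorem take_one_of_ne_nil {w : List (ℕ × ℕ)} (hw : w ≠ []) :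
    w.take 1 = [w.getD 0 (0, 0)] := by
  cases w with
  | nil => exact absurd rfl hw
  | cons p ws => simp

theorem minColList_lt {w : List (ℕ × ℕ)} (hw : w ≠ []) {n : ℕ} (h : ∀ p ∈ w, p.1 < n) :
    minColList w < n := by
  have hne : w.map Prod.fst ≠ [] := by simp [hw]
  obtain ⟨m, hm⟩ := WithTop.ne_top_iff_exists.mp (List.minimum_ne_top_of_ne_nil hne)
  have hmem := List.minimum_mem hm.symm
  obtain ⟨p, hp, hpm⟩ := List.mem_map.mp hmem
  have hmn : m < n := by rw [← hpm]; exact h p hp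
  have : minColList w = m := by rw [minColList, ← hm]; rfl
  omega

theorem StairScB_singleton (b : ℕ → ℕ) (c : ℕ) (p : ℕ × ℕ) :
    StairScB b c [p] = updB b p.1 c := by
  have h1 : bumpStart [p] = 0 := by
    unfold bumpStart; simp
  rw [StairScB_eq_updB b c (by simp), h1]
  simp [minColList, List.minimum_singleton, WithTop.untopD_coe]
  rfl

theorem StairScB_append (b : ℕ → ℕ) (x u : List (ℕ × ℕ)) (hx : x ≠ [])
    (hall : ∀ p ∈ u, (x.getLast hx).2 ≤ p.2) (c : ℕ) :
    StairScB b c (x ++ u) = StairScB (fun c' => StairScB b c' x) c u := by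
  by_cases hu : u = []
  · subst hu; rw [List.append_nil, StairScB_nil]
  · have hxu : x ++ u ≠ [] := by simp [hx]
    have hbs := bumpStart_append hx hu hall
    have hj := bumpStart_lt hu
    have hd : (x ++ u).drop (bumpStart (x ++ u)) = u.drop (bumpStart u) := by
      rw [hbs, List.drop_append]
      simp
    have ht : (x ++ u).take (bumpStart (x ++ u)) = x ++ u.take (bumpStart u) := by
      rw [hbs, List.take_append]
      simp
    rw [StairScB_eq_updB b c hxu, StairScB_eq_updB _ c hu, hd, ht]
    congr 1
    funext c'
    exact StairScB_append b x (u.take (bumpStart u)) hx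
      (fun p hp => hall p (List.mem_of_mem_take hp)) c'
termination_by u.length
decreasing_by
  simp only [List.length_take]
  omega

/-- Value of a tuple (digits in base `k`, color `0` most significant). -/
def valB (n k : ℕ) (b : ℕ → ℕ) : ℕ := ∑ i ∈ Finset.range n, b (n - 1 - i) * k ^ i

theorem sum_lt_pow {k : ℕ} (hk : 1 ≤ k) (g : ℕ → ℕ) :
    ∀ m, (∀ i, i < m → g i < k) → ∑ i ∈ Finset.range m, g i * k ^ i < k ^ m := by
  intro m
  induction m with
  | zero => intro _; simp
  | succ m ih =>
    intro hg
    rw [Finset.sum_range_succ, pow_succ]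
    have h1 := ih (fun i hi => hg i (by omega))
    have h2 : g m ≤ k - 1 := by have := hg m (by omega); omega
    have h3 : g m * k ^ m ≤ (k - 1) * k ^ m := Nat.mul_le_mul_right _ h2
    have h4 : k ^ m * k = k ^ m + (k - 1) * k ^ m := by
      have hke : k = (k - 1) + 1 := by omega
      calc k ^ m * k = k ^ m * ((k - 1) + 1) := by rw [← hke]
        _ = k ^ m + (k - 1) * k ^ m := by ring
    omega

theorem valB_lt {n k : ℕ} (hk : 1 ≤ k) {b : ℕ → ℕ} (hb : ∀ c, c < n → b c < k) :
    valB n k b < k ^ n :=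
  sum_lt_pow hk (fun i => b (n - 1 - i)) n (fun i hi => hb (n - 1 - i) (by omega))

theorem valB_updB {n k : ℕ} (hk : 1 ≤ k) {b : ℕ → ℕ} {d : ℕ} (hd : d < n)
    (hb : ∀ c, c < n → b c < k) : valB n k b < valB n k (updB b d) := by
  set j := n - 1 - d with hj
  have hjn : j < n := by omega
  have hdj : n - 1 - j = d := by omega
  have hsplit : ∀ f : ℕ → ℕ, ∑ i ∈ Finset.range n, f i =
      ∑ i ∈ Finset.range (j + 1), f i + ∑ i ∈ Finset.Ico (j + 1) n, f i := by
    intro f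
    have hc := Finset.sum_Ico_consecutive f (Nat.zero_le (j + 1)) (show j + 1 ≤ n by omega)
    simp only [Finset.range_eq_Ico]
    exact hc.symm
  have htail : ∑ i ∈ Finset.Ico (j + 1) n, updB b d (n - 1 - i) * k ^ i =
      ∑ i ∈ Finset.Ico (j + 1) n, b (n - 1 - i) * k ^ i := by
    apply Finset.sum_congr rfl
    intro i hi
    rw [Finset.mem_Ico] at hi
    have hcd : n - 1 - i < d := by omega
    simp [updB, hcd]
  have hhead : ∑ i ∈ Finset.range (j + 1), updB b d (n - 1 - i) * k ^ i =
      (b d + 1) * k ^ j := by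
    rw [Finset.sum_range_succ]
    have hz : ∑ i ∈ Finset.range j, updB b d (n - 1 - i) * k ^ i = 0 := by
      apply Finset.sum_eq_zero
      intro i hi
      rw [Finset.mem_range] at hi
      have hc1 : ¬ (n - 1 - i < d) := by omega
      have hc2 : d ≠ n - 1 - i := by omega
      simp [updB, hc1, hc2]
    rw [hz, hdj]
    simp [updB]
  have hheadb : ∑ i ∈ Finset.range (j + 1), b (n - 1 - i) * k ^ i
      < (b d + 1) * k ^ j := by
    rw [Finset.sum_range_succ, hdj]
    have h1 : ∑ i ∈ Finset.range j, b (n - 1 - i) * k ^ i < k ^ j :=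
      sum_lt_pow hk (fun i => b (n - 1 - i)) j (fun i hi => hb (n - 1 - i) (by omega))
    have h2 : (b d + 1) * k ^ j = k ^ j + b d * k ^ j := by ring
    omega
  rw [valB, valB, hsplit, hsplit, htail, hhead]
  omega

/-- Stair positions. -/
def IsStair (w : List (ℕ × ℕ)) (l : ℕ) : Prop :=
  l < w.length ∧ ∀ m, l ≤ m → m < w.length → (w.getD l (0, 0)).2 ≤ (w.getD m (0, 0)).2

theorem mainB (n k : ℕ) (hk : 1 ≤ k) :
    ∀ (N : ℕ) (w : List (ℕ × ℕ)), w.length = N → ∀ b : ℕ → ℕ,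
      (∀ m, m + 1 < w.length → (w.getD (m + 1) (0, 0)).2 ≤ (w.getD m (0, 0)).2 + 1) →
      (∀ m, m < w.length → (w.getD 0 (0, 0)).2 ≤ (w.getD m (0, 0)).2) →
      (∀ p ∈ w, p.1 < n) →
      (∀ c, c < n → b c < k) →
      (∀ m, m ≤ w.length → ∀ c, c < n → StairScB b c (w.take m) < k) →
      w.length ≤ 2 ^ (k ^ n - 1 - valB n k b) - 1 := by
  intro N
  induction N using Nat.strong_induction_on with
  | _ N IH =>
  intro w hN b hstep hmin hcol hb hsc
  by_cases hw : w = []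
  · subst hw; simp
  · classical
    have hL : 0 < w.length := List.length_pos_iff.mpr hw
    have stair_last : IsStair w (w.length - 1) := by
      refine ⟨by omega, fun m h1 h2 => ?_⟩
      have hme : m = w.length - 1 := by omega
      rw [hme]
    have inner : ∀ (D l : ℕ), w.length ≤ l + 1 + D → IsStair w l →
        w.length - 1 - l ≤
          2 ^ ((k ^ n - 1 - valB n k (fun c => StairScB b c (w.take (l + 1)))) + 1) - 2 := by
      intro D
      induction D with
      | zero =>
        intro l hD _
        have h0 : w.length - 1 - l = 0 := by omega
        rw [h0]; exact Nat.zero_le _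
      | succ D ihD =>
        intro l hD hst
        by_cases hl : w.length - 1 ≤ l
        · have h0 : w.length - 1 - l = 0 := by omega
          rw [h0]; exact Nat.zero_le _
        · push_neg at hl
          have hex : ∃ m, l < m ∧ IsStair w m := ⟨w.length - 1, by omega, stair_last⟩
          have hl'spec := Nat.find_spec hex
          have hl'min : ∀ m, m < Nat.find hex → ¬ (l < m ∧ IsStair w m) :=
            fun m hm => Nat.find_min hex hm
          have hl'L : Nat.find hex ≤ w.length - 1 := Nat.find_min' hex ⟨by omega, stair_last⟩
          set l' := Nat.find hex with hl'def
          obtain ⟨hll', hstl'⟩ := hl'spec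
          have hminst : ∀ m, l < m → m < l' → ¬ IsStair w m := by
            intro m h1 h2 hc
            exact hl'min m h2 ⟨h1, hc⟩
          have hl'lt : l' < w.length := by omega
          have hint : ∀ m, l < m → m < l' → (w.getD l' (0, 0)).2 < (w.getD m (0, 0)).2 := by
            by_contra hcon
            push_neg at hcon
            obtain ⟨m0, hm1, hm2, hm3⟩ := hcon
            set P : ℕ → Prop :=
              fun m => l < m ∧ m < l' ∧ (w.getD m (0, 0)).2 ≤ (w.getD l' (0, 0)).2 with hP
            have hPg : P (Nat.findGreatest P l') :=
              Nat.findGreatest_spec (le_of_lt hm2) ⟨hm1, hm2, hm3⟩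
            set g := Nat.findGreatest P l' with hg
            obtain ⟨hg1, hg2, hg3⟩ := hPg
            have hgr : ∀ m, g < m → m ≤ l' → ¬ P m := fun m h1 h2 =>
              Nat.findGreatest_is_greatest h1 h2
            have hgst : IsStair w g := by
              refine ⟨by omega, fun m hm1' hm2' => ?_⟩
              rcases eq_or_lt_of_le hm1' with rfl | hlt
              · exact le_rfl
              · by_cases hml' : m < l'
                · have h5 : ¬ ((w.getD m (0, 0)).2 ≤ (w.getD l' (0, 0)).2) := by
                    intro hcc
                    exact hgr m hlt (by omega) ⟨by omega, hml', hcc⟩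
                  omega
                · have h7 := hstl'.2 m (by omega) hm2'
                  omega
            exact hminst g hg1 hg2 hgst
          have hll'h : (w.getD l (0, 0)).2 ≤ (w.getD l' (0, 0)).2 := hst.2 l' (by omega) hl'lt
          have hxne : w.take (l' + 1) ≠ [] := by
            intro hc
            have := congrArg List.length hc
            simp only [List.length_take, List.length_nil] at this
            omega
          have hxlen : (w.take (l' + 1)).length = l' + 1 := by
            simp only [List.length_take]; omega
          have hxlast : ((w.take (l' + 1)).getLast?).getD (0, 0) = w.getD l' (0, 0) := by
            rw [getLast?_getD hxne, hxlen]
            simp only [Nat.add_sub_cancel]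
            exact getD_take_s9 (w := w) (t := l' + 1) (m := l') (by omega) (by omega)
          have hbx : bumpStart (w.take (l' + 1)) = l + 1 := by
            apply le_antisymm
            · apply bumpStart_le
              intro m hm hq
              rw [hxlen] at hm
              rw [hxlast, getD_take_s9 (w := w) (t := l' + 1) (m := m) (by omega) (by omega)] at hq
              by_contra hc
              push_neg at hc
              have := hint m (by omega) (by omega)
              omega
            · apply le_bumpStart
              · rw [hxlen]; omega
              · rw [hxlast, getD_take_s9 (w := w) (t := l' + 1) (m := l) (by omega) (by omega)]
                exact hll'h
          have hdseg : (w.take (l' + 1)).drop (l + 1) = (w.drop (l + 1)).take (l' - l) := by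
            rw [List.drop_take]
            congr 1
            omega
          have htseg : (w.take (l' + 1)).take (l + 1) = w.take (l + 1) := by
            rw [List.take_take]
            congr 1
            omega
          set d := minColList ((w.drop (l + 1)).take (l' - l)) with hd
          have hsegne : (w.drop (l + 1)).take (l' - l) ≠ [] := by
            intro hc
            have := congrArg List.length hc
            simp only [List.length_take, List.length_drop, List.length_nil] at this
            omega
          have hdn : d < n := by
            apply minColList_lt hsegne
            intro p hp
            exact hcol p (List.mem_of_mem_drop (List.mem_of_mem_take hp))
          have htl' : (fun c => StairScB b c (w.take (l' + 1))) =
              updB (fun c' => StairScB b c' (w.take (l + 1))) d := by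
            funext c
            rw [StairScB_eq_updB b c hxne, hbx, hdseg, htseg]
          have hbase : ∀ c, c < n → StairScB b c (w.take (l + 1)) < k :=
            fun c hc => hsc (l + 1) (by omega) c hc
          have hbase' : ∀ c, c < n → StairScB b c (w.take (l' + 1)) < k :=
            fun c hc => hsc (l' + 1) (by omega) c hc
          have hv01 : valB n k (fun c => StairScB b c (w.take (l + 1))) <
              valB n k (fun c => StairScB b c (w.take (l' + 1))) := by
            rw [htl']
            exact valB_updB hk hdn hbase
          have hv1lt : valB n k (fun c => StairScB b c (w.take (l' + 1))) < k ^ n :=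
            valB_lt hk hbase'
          set u := (w.drop (l + 1)).take (l' - l - 1) with hu
          have hulen : u.length = l' - l - 1 := by
            simp only [hu, List.length_take, List.length_drop]; omega
          have hugetD : ∀ m, m < l' - l - 1 → u.getD m (0, 0) = w.getD (l + 1 + m) (0, 0) := by
            intro m hm
            exact getD_drop_take (w := w) (s := l + 1) (t := l' - l - 1) (m := m) hm (by omega)
          have hyne : w.take (l + 1) ≠ [] := by
            intro hc
            have := congrArg List.length hc
            simp only [List.length_take, List.length_nil] at this
            omega
          have hylen : (w.take (l + 1)).length = l + 1 := by
            simp only [List.length_take]; omega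
          have hylast : ((w.take (l + 1)).getLast hyne) = w.getD l (0, 0) := by
            have h1 : ((w.take (l + 1)).getLast?).getD (0, 0) = w.getD l (0, 0) := by
              rw [getLast?_getD hyne, hylen]
              simp only [Nat.add_sub_cancel]
              exact getD_take_s9 (w := w) (t := l + 1) (m := l) (by omega) (by omega)
            rw [List.getLast?_eq_getLast hyne] at h1
            simpa using h1
          have hsplit : ∀ m, m ≤ l' - l - 1 →
              ∀ c, StairScB (fun c' => StairScB b c' (w.take (l + 1))) c
                ((w.drop (l + 1)).take m) = StairScB b c (w.take (l + 1 + m)) := by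
            intro m hm c
            have hallm : ∀ p ∈ (w.drop (l + 1)).take m,
                ((w.take (l + 1)).getLast hyne).2 ≤ p.2 := by
              intro p hp
              obtain ⟨i, hi, hip⟩ := List.mem_iff_getElem.mp hp
              have hilen : i < m := by
                have h8 := hi
                simp only [List.length_take, List.length_drop] at h8
                omega
              have hpw : p = w.getD (l + 1 + i) (0, 0) := by
                rw [← hip, ← List.getD_eq_getElem _ (0, 0) hi]
                exact getD_drop_take (w := w) (s := l + 1) (t := m) (m := i) hilen (by omega)
              rw [hylast, hpw]
              have := hint (l + 1 + i) (by omega) (by omega)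
              omega
            rw [← StairScB_append b (w.take (l + 1)) ((w.drop (l + 1)).take m) hyne hallm c]
            congr 1
            exact (List.take_add (l := w) (i := l + 1) (j := m)).symm
          have hscu : ∀ m, m ≤ u.length → ∀ c, c < n →
              StairScB (fun c' => StairScB b c' (w.take (l + 1))) c (u.take m) < k := by
            intro m hm c hc
            rw [hulen] at hm
            have h9 : u.take m = (w.drop (l + 1)).take m := by
              rw [hu, List.take_take]
              congr 1
              omega
            rw [h9, hsplit m hm c]
            exact hsc (l + 1 + m) (by omega) c hc
          have hstepu : ∀ m, m + 1 < u.length →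
              (u.getD (m + 1) (0, 0)).2 ≤ (u.getD m (0, 0)).2 + 1 := by
            intro m hm
            rw [hulen] at hm
            rw [hugetD (m + 1) (by omega), hugetD m (by omega)]
            have h10 := hstep (l + 1 + m) (by omega)
            have harg : l + 1 + (m + 1) = l + 1 + m + 1 := by omega
            rw [harg]
            exact h10
          have hminu : ∀ m, m < u.length → (u.getD 0 (0, 0)).2 ≤ (u.getD m (0, 0)).2 := by
            intro m hm
            rw [hulen] at hm
            rw [hugetD 0 (by omega), hugetD m (by omega)]
            simp only [Nat.add_zero]
            have h1 : (w.getD (l + 1) (0, 0)).2 ≤ (w.getD l (0, 0)).2 + 1 :=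
              hstep l (by omega)
            rcases Nat.eq_zero_or_pos m with rfl | hm0
            · exact le_rfl
            · have h2 := hint (l + 1 + m) (by omega) (by omega)
              omega
          have hcolu : ∀ p ∈ u, p.1 < n := by
            intro p hp
            exact hcol p (List.mem_of_mem_drop (List.mem_of_mem_take hp))
          have hIHu := IH u.length (by omega) u rfl
            (fun c' => StairScB b c' (w.take (l + 1))) hstepu hminu hcolu hbase hscu
          have hihd := ihD l' (by omega) hstl'
          set v0 := valB n k (fun c => StairScB b c (w.take (l + 1))) with hv0
          set v1 := valB n k (fun c => StairScB b c (w.take (l' + 1))) with hv1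
          set e0 := k ^ n - 1 - v0 with he0
          set e1 := k ^ n - 1 - v1 with he1
          have he10 : e1 + 1 ≤ e0 := by omega
          have hp1 : 2 ^ (e1 + 1) ≤ 2 ^ e0 := Nat.pow_le_pow_right (by norm_num) he10
          have hp2 : 2 ^ (e0 + 1) = 2 ^ e0 + 2 ^ e0 := by rw [pow_succ]; ring
          have hp3 : 1 ≤ 2 ^ e0 := Nat.one_le_two_pow
          have hp4 : 2 ≤ 2 ^ (e1 + 1) := by
            calc 2 = 2 ^ 1 := by norm_num
            _ ≤ 2 ^ (e1 + 1) := Nat.pow_le_pow_right (by norm_num) (by omega)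
          omega
    have h00 := inner w.length 0 (by omega) ⟨hL, fun m _ h2 => hmin m h2⟩
    simp only [Nat.zero_add, Nat.sub_zero] at h00
    have ht0 : (fun c => StairScB b c (w.take 1)) = updB b (w.getD 0 (0, 0)).1 := by
      funext c
      rw [take_one_of_ne_nil hw, StairScB_singleton]
    have hc0 : (w.getD 0 (0, 0)).1 < n := by
      apply hcol
      rw [List.getD_eq_getElem _ _ hL]
      exact List.getElem_mem _
    have hv00 : valB n k b < valB n k (fun c => StairScB b c (w.take 1)) := by
      rw [ht0]
      exact valB_updB hk hc0 hb
    have hv00lt : valB n k (fun c => StairScB b c (w.take 1)) < k ^ n :=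
      valB_lt hk (fun c hc => hsc 1 (by omega) c hc)
    set v00 := valB n k (fun c => StairScB b c (w.take 1)) with hv00d
    set R := k ^ n - 1 - valB n k b with hR
    set e00 := k ^ n - 1 - v00 with he00
    have hfin : e00 + 1 ≤ R := by omega
    have hq1 : 2 ^ (e00 + 1) ≤ 2 ^ R := Nat.pow_le_pow_right (by norm_num) hfin
    have hq2 : 2 ≤ 2 ^ (e00 + 1) := by
      calc 2 = 2 ^ 1 := by norm_num
      _ ≤ 2 ^ (e00 + 1) := Nat.pow_le_pow_right (by norm_num) (by omega)
    omega

/-- Lemma 3: every finite path of length at least `2 ^ (k ^ n)` starting at a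
configuration of stack height 0 reaches stair-score `k` for some color
`c ∈ [n]`. -/
theorem stmt9 {Q Γ : Type*} [Finite Q] [Finite Γ] (P : PDS Q Γ) (n : ℕ)
    (col : Q → ℕ) (hcol : ∀ q, col q < n) (k : ℕ) (hk : 1 ≤ k)
    (w : List (Config Q Γ)) (hchain : w.Chain' P.step)
    (hhead : ∃ q, w.head? = some (q, []))
    (hlen : 2 ^ k ^ n ≤ w.length) :
    ∃ c < n, k ≤ MaxStairSc c (toCH col w) := by
  classical
  by_contra hcon
  push_neg at hcon
  obtain ⟨q, hq⟩ := hhead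
  have hw0 : w ≠ [] := by
    intro h; rw [h] at hq; simp at hq
  have hL : 0 < w.length := List.length_pos_iff.mpr hw0
  set W := toCH col w with hW
  have hWlen : W.length = w.length := by simp [hW, toCH]
  have hWget : ∀ m, (hm : m < w.length) →
      W.getD m (0, 0) = (col (w[m]).1, (w[m]).2.length) := by
    intro m hm
    rw [hW, toCH, List.getD_eq_getElem _ _ (by simpa using hm), List.getElem_map]
  have hchain' : ∀ m, ∀ hm : m + 1 < w.length,
      P.step (w[m]'(by omega)) (w[m + 1]'(by omega)) := by
    have hcg := List.isChain_iff_getElem.mp hchain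
    intro m hm
    have h2 := hcg m (by omega)
    simpa using h2
  have hstepW : ∀ m, m + 1 < W.length →
      (W.getD (m + 1) (0, 0)).2 ≤ (W.getD m (0, 0)).2 + 1 := by
    intro m hm
    rw [hWlen] at hm
    rw [hWget (m + 1) hm, hWget m (by omega)]
    have hs := hchain' m hm
    simp only [PDS.step] at hs
    dsimp only
    rcases hs with ⟨h1, h2⟩ | ⟨a, rest, α, h1, h2, h3⟩
    · have hb1 := P.bound1 _ _ _ h2
      have h1l : ((w[m]'(by omega)).2).length = 0 := by rw [h1]; rfl
      omega
    · have hb2 := P.bound2 _ _ _ _ h2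
      have h1l : ((w[m]'(by omega)).2).length = rest.length + 1 := by rw [h1]; simp
      have h3l : ((w[m + 1]'(by omega)).2).length = α.length + rest.length := by
        rw [h3]; simp
      omega
  have h0 : ((w[0]'hL).2) = [] := by
    cases w with
    | nil => simp at hq
    | cons p ws =>
      have hpq : p = (q, []) := by simpa using hq
      simp [hpq]
  have hminW : ∀ m, m < W.length → (W.getD 0 (0, 0)).2 ≤ (W.getD m (0, 0)).2 := by
    intro m hm
    rw [hWlen] at hm
    rw [hWget 0 (by omega), hWget m hm]
    dsimp only
    rw [h0]
    simp
  have hcolW : ∀ p ∈ W, p.1 < n := by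
    intro p hp
    rw [hW, toCH] at hp
    obtain ⟨v, hv, rfl⟩ := List.mem_map.mp hp
    exact hcol _
  have hscW : ∀ m, m ≤ W.length → ∀ c, c < n → StairScB (fun _ => 0) c (W.take m) < k := by
    intro m hm c hc
    rw [← StairSc_eq_StairScB]
    have h1 : StairSc c (W.take m) ≤ MaxStairSc c W := by
      unfold MaxStairSc
      exact Finset.le_sup (f := fun m => StairSc c (W.take m)) (b := m)
        (Finset.mem_range.mpr (by omega))
    exact lt_of_le_of_lt h1 (hcon c hc)
  have hmain := mainB n k hk W.length W rfl (fun _ => 0) hstepW hminW hcolW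
    (fun c hc => hk) hscW
  have hval0 : valB n k (fun _ => 0) = 0 := by simp [valB]
  rw [hval0, Nat.sub_zero, hWlen] at hmain
  have hkn : 1 ≤ k ^ n := Nat.one_le_pow _ _ (by omega)
  have h2 : 2 ^ (k ^ n - 1 + 1) = 2 ^ k ^ n := by congr 1; omega
  have h3 : 2 ^ (k ^ n - 1 + 1) = 2 ^ (k ^ n - 1) + 2 ^ (k ^ n - 1) := by
    rw [pow_succ]; ring
  have h4 : 1 ≤ 2 ^ (k ^ n - 1) := Nat.one_le_two_pow
  omega

end FDGames
end
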